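/- arXiv:0801.3762 — 4 statements merged into one kernel-verified Lean document; each statement's English description precedes it below -/
import Mathlib

section
/- The number of triangulations of a convex polygon with n+2 vertices equals the n-th Catalan number C(n) = (2n)! / ((n+1)! · n!). -/
set_option linter.unusedSectionVars false
set_option linter.unnecessarySeqFocus false
set_option linter.unusedVariables false
set_option maxHeartbeats 1600000


namespace CTA

/-- `x` lies strictly between `a` and `b` going anticlockwise around the `m`-gon. -/
def Btw (m : ℕ) (a x b : ZMod m) : Prop :=
  0 < (x - a).val ∧ (x - a).val < (b - a).val

/-- `p` is a diagonal of the convex `m`-gon: its endpoints are distinct and non-adjacent. -/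
def IsPolyDiag (m : ℕ) (p : Sym2 (ZMod m)) : Prop :=
  ∀ a b : ZMod m, p = s(a, b) → 2 ≤ (b - a).val ∧ 2 ≤ (a - b).val

/-- Two diagonals cross (intersect in an interior point of both). -/
def Crosses (m : ℕ) (p q : Sym2 (ZMod m)) : Prop :=
  ∃ a b c d : ZMod m, p = s(a, b) ∧ q = s(c, d) ∧ Btw m a c b ∧ Btw m b d a

/-- A triangulation: a maximal set of pairwise non-crossing diagonals. -/
def IsTriangulation (m : ℕ) (Δ : Set (Sym2 (ZMod m))) : Prop :=
  (∀ p ∈ Δ, IsPolyDiag m p) ∧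
  (∀ p ∈ Δ, ∀ q ∈ Δ, ¬ Crosses m p q) ∧
  ∀ Δ' : Set (Sym2 (ZMod m)), Δ ⊆ Δ' → (∀ p ∈ Δ', IsPolyDiag m p) →
    (∀ p ∈ Δ', ∀ q ∈ Δ', ¬ Crosses m p q) → Δ' = Δ

/-- A diagonal is close to the border if its endpoints are at boundary distance exactly 2. -/
def CloseBorder (m : ℕ) (p : Sym2 (ZMod m)) : Prop :=
  ∃ a b : ZMod m, p = s(a, b) ∧ min (b - a).val (a - b).val = 2

/-- Rotation of a triangulation by `k` vertices. -/
def rotate (m : ℕ) (k : ZMod m) (Δ : Set (Sym2 (ZMod m))) : Set (Sym2 (ZMod m)) :=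
  Sym2.map (· + k) '' Δ

/-- The orbit of a triangulation under the rotation action of `ZMod m`. -/
def rotOrbit (m : ℕ) (Δ : Set (Sym2 (ZMod m))) : Set (Set (Sym2 (ZMod m))) :=
  {Δ' | ∃ k : ZMod m, Δ' = rotate m k Δ}

/-- The number of orbits of the rotation action on triangulations of the `m`-gon. -/
noncomputable def numOrbits (m : ℕ) : ℕ :=
  Nat.card {O : Set (Set (Sym2 (ZMod m))) // ∃ Δ, IsTriangulation m Δ ∧ O = rotOrbit m Δ}

/-- The `n`-th Catalan number `(2n)!/((n+1)!·n!)`. -/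
def catalanC (n : ℕ) : ℕ :=
  Nat.factorial (2 * n) / (Nat.factorial (n + 1) * Nat.factorial n)

/-- The diagonal close to the border cutting off the vertex `v`. -/
def cutDiag (m : ℕ) (v : ZMod m) : Sym2 (ZMod m) := s(v - 1, v + 1)

/-- Deleting the vertex `v` from the `(m+1)`-gon: the order-preserving relabelling of the
remaining vertices by `ZMod m`. -/
def delVtx (m : ℕ) (v : ZMod (m + 1)) (x : ZMod (m + 1)) : ZMod m :=
  if x.val < v.val then (x.val : ZMod m) else ((x.val - 1 : ℕ) : ZMod m)

/-- Inserting a new vertex on the border edge between `a` and `a+1`: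
the induced relabelling of old vertices into `ZMod (m+1)`. -/
def insVtx (m : ℕ) (a : ZMod m) (x : ZMod m) : ZMod (m + 1) :=
  if x.val ≤ a.val then (x.val : ZMod (m + 1)) else ((x.val + 1 : ℕ) : ZMod (m + 1))

/-- Factoring out the close-to-the-border diagonal cutting off the vertex `v`:
the diagonal becomes a border edge of the smaller polygon, all other diagonals unchanged. -/
def contract (m : ℕ) (v : ZMod (m + 1)) (Δ : Set (Sym2 (ZMod (m + 1)))) :
    Set (Sym2 (ZMod m)) :=
  Sym2.map (delVtx m v) '' (Δ \ {cutDiag (m + 1) v})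

/-- An edge of the triangulated polygon: a diagonal of `Δ` or a border edge. -/
def IsEdge (m : ℕ) (Δ : Set (Sym2 (ZMod m))) (p : Sym2 (ZMod m)) : Prop :=
  p ∈ Δ ∨ ∃ a : ZMod m, p = s(a, a + 1)

/-- The arrow relation of the quiver `Q_Δ`: an arrow `p → q` when the diagonals `p` and `q`
bound a common triangle of `Δ` and `q` is obtained from `p` by anticlockwise rotation about
their common endpoint. -/
def Arrow (m : ℕ) (Δ : Set (Sym2 (ZMod m))) (p q : Sym2 (ZMod m)) : Prop :=
  p ∈ Δ ∧ q ∈ Δ ∧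
    ∃ a b c : ZMod m, p = s(a, b) ∧ q = s(a, c) ∧ IsEdge m Δ s(b, c) ∧ Btw m b c a

/-- Fomin–Zelevinsky mutation of an arrow relation (quiver with no loops, no 2-cycles and
no multiple arrows) at the vertex `k`. -/
def mutArrow (m : ℕ) (A : Sym2 (ZMod m) → Sym2 (ZMod m) → Prop) (k p q : Sym2 (ZMod m)) :
    Prop :=
  (p = k ∧ A q k) ∨
  (p ≠ k ∧ q = k ∧ A k p) ∨
  (p ≠ k ∧ q ≠ k ∧
    ((A p k ∧ A k q ∧ ¬ A q p) ∨ (A p q ∧ ¬ (A q k ∧ A k p))))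


variable {m : ℕ} [NeZero m]

lemma vsub (x y : ZMod m) :
    (y - x).val = if x.val ≤ y.val then y.val - x.val else y.val + m - x.val := by
  split_ifs with h
  · rw [ZMod.val_sub h]
  · have hx := ZMod.val_lt x
    have hy := ZMod.val_lt y
    have : y - x = ((y.val + m - x.val : ℕ) : ZMod m) := by
      push_cast [Nat.cast_sub (by omega : x.val ≤ y.val + m)]
      rw [ZMod.natCast_val, ZMod.natCast_val, ZMod.natCast_self]
      ring_nf
      simp [ZMod.cast_id]
    rw [this, ZMod.val_natCast, Nat.mod_eq_of_lt (by omega)]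

lemma val_inj {x y : ZMod m} (h : x.val = y.val) : x = y := ZMod.val_injective m h

lemma isPolyDiag_mk {a b : ZMod m} :
    IsPolyDiag m s(a, b) ↔ 2 ≤ (b - a).val ∧ 2 ≤ (a - b).val := by
  constructor
  · exact fun h => h a b rfl
  · rintro ⟨h1, h2⟩ c d hcd
    rw [Sym2.eq_iff] at hcd
    rcases hcd with ⟨rfl, rfl⟩ | ⟨rfl, rfl⟩
    · exact ⟨h1, h2⟩
    · exact ⟨h2, h1⟩

lemma crosses_symm {p q : Sym2 (ZMod m)} (h : Crosses m p q) : Crosses m q p := by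
  obtain ⟨a, b, c, d, hp, hq, h1, h2⟩ := h
  refine ⟨c, d, b, a, hq, by rw [hp, Sym2.eq_swap], ?_, ?_⟩ <;>
  · simp only [Btw, vsub] at *
    have := ZMod.val_lt a; have := ZMod.val_lt b; have := ZMod.val_lt c; have := ZMod.val_lt d
    split_ifs at * <;> omega

lemma crosses_diag {p q : Sym2 (ZMod m)} (h : Crosses m p q) :
    IsPolyDiag m p ∧ IsPolyDiag m q := by
  obtain ⟨a, b, c, d, hp, hq, h1, h2⟩ := h
  subst hp hq
  rw [isPolyDiag_mk, isPolyDiag_mk]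
  simp only [Btw, vsub] at *
  have := ZMod.val_lt a; have := ZMod.val_lt b; have := ZMod.val_lt c; have := ZMod.val_lt d
  split_ifs at * <;> omega

lemma not_crosses_self (p : Sym2 (ZMod m)) : ¬ Crosses m p p := by
  rintro ⟨a, b, c, d, hp, hq, h1, h2⟩
  rw [hp, Sym2.eq_iff] at hq
  simp only [Btw, vsub] at h1 h2
  have := ZMod.val_lt a; have := ZMod.val_lt b; have := ZMod.val_lt c; have := ZMod.val_lt d
  rcases hq with ⟨rfl, rfl⟩ | ⟨rfl, rfl⟩ <;> split_ifs at * <;> omega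

/-- separation: a chord inside `[0,k]` never crosses a chord inside `[k,m-1]`. -/
lemma not_crosses_sep {k : ℕ} {p q : Sym2 (ZMod m)}
    (hp : ∀ x ∈ p, x.val ≤ k) (hq : ∀ x ∈ q, k ≤ x.val) : ¬ Crosses m p q := by
  rintro ⟨a, b, c, d, hpe, hqe, h1, h2⟩
  have ha := hp a (by rw [hpe]; exact Sym2.mem_mk_left a b)
  have hb := hp b (by rw [hpe]; exact Sym2.mem_mk_right a b)
  have hc := hq c (by rw [hqe]; exact Sym2.mem_mk_left c d)
  have hd := hq d (by rw [hqe]; exact Sym2.mem_mk_right c d)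
  simp only [Btw, vsub] at h1 h2
  have := ZMod.val_lt a; have := ZMod.val_lt b; have := ZMod.val_lt c; have := ZMod.val_lt d
  split_ifs at h1 h2 <;> omega


/-- embedding of the arc `a, a+1, …, a+ℓ` as an `(ℓ+1)`-gon. -/
def emb (a : ZMod m) (ℓ : ℕ) (x : ZMod (ℓ + 1)) : ZMod m := a + (x.val : ZMod m)

def proj (a : ZMod m) (ℓ : ℕ) (z : ZMod m) : ZMod (ℓ + 1) := ((z - a).val : ZMod (ℓ + 1))

variable {ℓ : ℕ}

lemma emb_sub_emb (hm : ℓ < m) (a : ZMod m) (x y : ZMod (ℓ + 1)) :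
    (emb a ℓ y - emb a ℓ x).val
      = if x.val ≤ y.val then y.val - x.val else y.val + m - x.val := by
  have hx : ((x.val : ZMod m)).val = x.val :=
    ZMod.val_cast_of_lt (by have := ZMod.val_lt x; omega)
  have hy : ((y.val : ZMod m)).val = y.val :=
    ZMod.val_cast_of_lt (by have := ZMod.val_lt y; omega)
  have : emb a ℓ y - emb a ℓ x = (y.val : ZMod m) - (x.val : ZMod m) := by
    show a + (y.val : ZMod m) - (a + (x.val : ZMod m)) = _
    ring
  rw [this, vsub, hx, hy]

lemma emb_sub_base (hm : ℓ < m) (a : ZMod m) (x : ZMod (ℓ + 1)) : (emb a ℓ x - a).val = x.val := by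
  have : emb a ℓ x - a = (x.val : ZMod m) := by simp [emb]
  rw [this, ZMod.val_cast_of_lt (by have := ZMod.val_lt x; omega)]

lemma emb_inj (hm : ℓ < m) (a : ZMod m) : Function.Injective (emb a ℓ) := by
  intro x y h
  have := emb_sub_base hm a x
  rw [h, emb_sub_base hm a y] at this
  exact ZMod.val_injective _ this.symm

lemma emb_proj (a : ZMod m) {z : ZMod m} (hz : (z - a).val ≤ ℓ) :
    emb a ℓ (proj a ℓ z) = z := by
  have h1 : (proj a ℓ z).val = (z - a).val := by
    rw [proj, ZMod.val_cast_of_lt (by omega)]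
  rw [emb, h1, ZMod.natCast_val, ZMod.cast_id]
  ring

lemma btw_emb (hm : ℓ < m) (a : ZMod m) (x z y : ZMod (ℓ + 1)) :
    Btw m (emb a ℓ x) (emb a ℓ z) (emb a ℓ y) ↔ Btw (ℓ + 1) x z y := by
  simp only [Btw, emb_sub_emb hm]
  simp only [vsub]
  have := ZMod.val_lt x; have := ZMod.val_lt y; have := ZMod.val_lt z
  split_ifs <;> omega

lemma diag_emb (hm : ℓ < m) (a : ZMod m) {x y : ZMod (ℓ + 1)}
    (h : IsPolyDiag (ℓ + 1) s(x, y)) : IsPolyDiag m s(emb a ℓ x, emb a ℓ y) := by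
  rw [isPolyDiag_mk] at h ⊢
  rw [emb_sub_emb hm, emb_sub_emb hm]
  simp only [vsub] at h
  have := ZMod.val_lt x; have := ZMod.val_lt y
  split_ifs at * <;> omega

lemma crosses_emb (hm : ℓ < m) (a : ZMod m) (q q' : Sym2 (ZMod (ℓ + 1))) :
    Crosses m (Sym2.map (emb a ℓ) q) (Sym2.map (emb a ℓ) q') ↔ Crosses (ℓ + 1) q q' := by
  constructor
  · rintro ⟨A, B, C, D, hp, hq, h1, h2⟩
    induction q using Sym2.ind with | _ x y =>
    induction q' using Sym2.ind with | _ z w =>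
    rw [Sym2.map_pair_eq, Sym2.eq_iff] at hp hq
    rcases hp with ⟨hA, hB⟩ | ⟨hA, hB⟩ <;> rcases hq with ⟨hC, hD⟩ | ⟨hC, hD⟩ <;>
      subst hA hB hC hD
    · exact ⟨x, y, z, w, rfl, rfl, (btw_emb hm a _ _ _).mp h1, (btw_emb hm a _ _ _).mp h2⟩
    · exact ⟨x, y, w, z, rfl, Sym2.eq_swap, (btw_emb hm a _ _ _).mp h1,
        (btw_emb hm a _ _ _).mp h2⟩
    · exact ⟨y, x, z, w, Sym2.eq_swap, rfl, (btw_emb hm a _ _ _).mp h1,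
        (btw_emb hm a _ _ _).mp h2⟩
    · exact ⟨y, x, w, z, Sym2.eq_swap, Sym2.eq_swap, (btw_emb hm a _ _ _).mp h1,
        (btw_emb hm a _ _ _).mp h2⟩
  · rintro ⟨x, y, z, w, hp, hq, h1, h2⟩
    subst hp hq
    exact ⟨emb a ℓ x, emb a ℓ y, emb a ℓ z, emb a ℓ w, by rw [Sym2.map_pair_eq],
      by rw [Sym2.map_pair_eq], (btw_emb hm a _ _ _).mpr h1, (btw_emb hm a _ _ _).mpr h2⟩


/-- the apex of the triangle over the border edge `s(m-1, 0)`. -/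
def IsApex (m : ℕ) (k : ℕ) (Δ : Set (Sym2 (ZMod m))) : Prop :=
  1 ≤ k ∧ k ≤ m - 2 ∧
    (2 ≤ k → s((0 : ZMod m), (k : ZMod m)) ∈ Δ) ∧
    (k ≤ m - 3 → s((k : ZMod m), ((m - 1 : ℕ) : ZMod m)) ∈ Δ)

section apex

variable {Δ : Set (Sym2 (ZMod m))} {k : ℕ}

/-- a diagonal with one endpoint strictly inside `(0,k)` and the other strictly inside
`(k, m-1)` crosses one of the two apex edges; with endpoint `m-1` it gives a smaller
element of the defining set. -/
lemma straddle_aux (hm : 3 ≤ m) (hk1 : 1 ≤ k) (hk2 : k ≤ m - 2)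
    (hcr : ∀ p ∈ Δ, ∀ q ∈ Δ, ¬ Crosses m p q)
    (hdiag : ∀ p ∈ Δ, IsPolyDiag m p)
    (h0k : 2 ≤ k → s((0 : ZMod m), (k : ZMod m)) ∈ Δ)
    (hkB : k ≤ m - 3 → s((k : ZMod m), ((m - 1 : ℕ) : ZMod m)) ∈ Δ)
    {c d : ZMod m} (hmem : s(c, d) ∈ Δ) (hc : c.val < k) (hd : k < d.val) : False := by
  have hK : ((k : ℕ) : ZMod m).val = k := ZMod.val_cast_of_lt (by omega)
  have hB : (((m - 1 : ℕ)) : ZMod m).val = m - 1 := ZMod.val_cast_of_lt (by omega)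
  have hcv := ZMod.val_lt c
  have hdv := ZMod.val_lt d
  have hpd := isPolyDiag_mk.mp (hdiag _ hmem)
  rw [vsub, vsub] at hpd
  rcases Nat.lt_or_ge c.val 1 with hc0 | hc1
  · -- c.val = 0, so c = 0
    rcases Nat.lt_or_ge d.val (m - 1) with hdm | hdm
    · -- crosses s(k, m-1)
      have hKB := hkB (by omega)
      refine hcr _ hmem _ hKB ⟨c, d, _, _, rfl, rfl, ?_, ?_⟩ <;>
        · simp only [Btw, vsub, hK, hB] <;> split_ifs <;> omega
    · -- d = m-1, not a diagonal with c = 0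
      split_ifs at hpd <;> omega
  · -- 1 ≤ c.val < k, so k ≥ 2 and s(0,k) ∈ Δ ; p crosses it
    have h0K := h0k (by omega)
    refine hcr _ h0K _ hmem ⟨(0 : ZMod m), (k : ZMod m), _, _, rfl, rfl, ?_, ?_⟩
    · simp only [Btw, vsub, hK, ZMod.val_zero]; split_ifs <;> omega
    · simp only [Btw, vsub, hK, ZMod.val_zero]; split_ifs <;> omega
  -- Btw 0 c K and Btw K d 0.

lemma side_split (hm : 3 ≤ m) (hk1 : 1 ≤ k) (hk2 : k ≤ m - 2)
    (hcr : ∀ p ∈ Δ, ∀ q ∈ Δ, ¬ Crosses m p q)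
    (hdiag : ∀ p ∈ Δ, IsPolyDiag m p)
    (h0k : 2 ≤ k → s((0 : ZMod m), (k : ZMod m)) ∈ Δ)
    (hkB : k ≤ m - 3 → s((k : ZMod m), ((m - 1 : ℕ) : ZMod m)) ∈ Δ)
    {p : Sym2 (ZMod m)} (hp : p ∈ Δ) :
    (∀ x ∈ p, x.val ≤ k) ∨ (∀ x ∈ p, k ≤ x.val) := by
  induction p using Sym2.ind with | _ c d =>
  rcases Nat.lt_or_ge c.val k with hc | hc <;> rcases Nat.lt_or_ge d.val k with hd | hd
  · left; intro x hx; rcases Sym2.mem_iff.mp hx with rfl | rfl <;> omega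
  · rcases Nat.eq_or_lt_of_le hd with hd' | hd'
    · left; intro x hx; rcases Sym2.mem_iff.mp hx with rfl | rfl <;> omega
    · exact absurd (straddle_aux hm hk1 hk2 hcr hdiag h0k hkB hp hc hd') id
  · rcases Nat.eq_or_lt_of_le hc with hc' | hc'
    · left; intro x hx; rcases Sym2.mem_iff.mp hx with rfl | rfl <;> omega
    · exact absurd (straddle_aux hm hk1 hk2 hcr hdiag h0k hkB
        (by rwa [Sym2.eq_swap] at hp) hd hc') id
  · right; intro x hx; rcases Sym2.mem_iff.mp hx with rfl | rfl <;> omega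

end apex
section apex2
variable {Δ : Set (Sym2 (ZMod m))} {k : ℕ}
lemma apex_unique (hm : 3 ≤ m) (hcr : ∀ p ∈ Δ, ∀ q ∈ Δ, ¬ Crosses m p q)
    {k' : ℕ} (h : IsApex m k Δ) (h' : IsApex m k' Δ) : k = k' := by
  obtain ⟨hk1, hk2, h0k, hkB⟩ := h
  obtain ⟨hk1', hk2', h0k', hkB'⟩ := h'
  have hK : ((k : ℕ) : ZMod m).val = k := ZMod.val_cast_of_lt (by omega)
  have hK' : ((k' : ℕ) : ZMod m).val = k' := ZMod.val_cast_of_lt (by omega)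
  have hB : (((m - 1 : ℕ)) : ZMod m).val = m - 1 := ZMod.val_cast_of_lt (by omega)
  by_contra hne
  -- wlog k < k'
  rcases Nat.lt_or_ge k k' with hlt | hge
  · exact hcr _ (h0k' (by omega)) _ (hkB (by omega))
      ⟨(0 : ZMod m), (k' : ZMod m), (k : ZMod m), ((m - 1 : ℕ) : ZMod m), rfl, rfl,
        by simp only [Btw, vsub, hK, hK', ZMod.val_zero]; split_ifs <;> omega,
        by simp only [Btw, vsub, hK, hK', hB, ZMod.val_zero]; split_ifs <;> omega⟩
  · have hlt : k' < k := by omega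
    exact hcr _ (h0k (by omega)) _ (hkB' (by omega))
      ⟨(0 : ZMod m), (k : ZMod m), (k' : ZMod m), ((m - 1 : ℕ) : ZMod m), rfl, rfl,
        by simp only [Btw, vsub, hK, hK', ZMod.val_zero]; split_ifs <;> omega,
        by simp only [Btw, vsub, hK, hK', hB, ZMod.val_zero]; split_ifs <;> omega⟩

lemma apex_exists (hm : 3 ≤ m) (hT : IsTriangulation m Δ) : ∃ k, IsApex m k Δ := by
  obtain ⟨hdiag, hcr, hmax⟩ := hT
  have hB : (((m - 1 : ℕ)) : ZMod m).val = m - 1 := ZMod.val_cast_of_lt (by omega)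
  set S : Set ℕ := {j | 1 ≤ j ∧ j ≤ m - 2 ∧
    (j = m - 2 ∨ s((j : ZMod m), ((m - 1 : ℕ) : ZMod m)) ∈ Δ)} with hS
  have hSne : (m - 2) ∈ S := ⟨by omega, le_refl _, Or.inl rfl⟩
  set k := sInf S with hkdef
  have hkS : k ∈ S := Nat.sInf_mem ⟨_, hSne⟩
  obtain ⟨hk1, hk2, hkalt⟩ := hkS
  have hK : ((k : ℕ) : ZMod m).val = k := ZMod.val_cast_of_lt (by omega)
  have hkB : k ≤ m - 3 → s((k : ZMod m), ((m - 1 : ℕ) : ZMod m)) ∈ Δ := by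
    intro h3; rcases hkalt with h | h; · omega
    · exact h
  refine ⟨k, hk1, hk2, ?_, hkB⟩
  intro hk2'
  -- use maximality to add the diagonal s(0,k)
  set D : Sym2 (ZMod m) := s((0 : ZMod m), (k : ZMod m)) with hD
  have hDdiag : IsPolyDiag m D := by
    rw [hD, isPolyDiag_mk, vsub, vsub, hK, ZMod.val_zero]
    split_ifs <;> omega
  -- D crosses nothing in Δ
  have hDnc : ∀ p ∈ Δ, ¬ Crosses m D p := by
    rintro p hp ⟨a, b, c, d, hDe, hpe, h1, h2⟩
    -- a,b is a rep of s(0,k)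
    rw [hD, Sym2.eq_iff] at hDe
    subst hpe
    have hcv := ZMod.val_lt c
    have hdv := ZMod.val_lt d
    -- reduce both orientations to: c' strictly in (0,k), d' strictly in (k,m)
    have key : ∀ c' d' : ZMod m, s(c', d') ∈ Δ → 0 < c'.val → c'.val < k →
        k < d'.val → False := by
      intro c' d' hmem h1' h2' h3'
      have hdv' := ZMod.val_lt d'
      rcases Nat.lt_or_ge d'.val (m - 1) with hdm | hdm
      · -- d' strictly inside (k, m-1): s(c', d') crosses s(k, m-1) which is in Δ
        have hKB := hkB (by omega)
        exact hcr _ hmem _ hKB ⟨c', d', (k : ZMod m), ((m - 1 : ℕ) : ZMod m), rfl, rfl,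
          by simp only [Btw, vsub, hK]; split_ifs <;> omega,
          by simp only [Btw, vsub, hK, hB]; split_ifs <;> omega⟩
      · -- d' = m-1 : then c'.val ∈ S, contradicting minimality of k
        have hd' : d' = ((m - 1 : ℕ) : ZMod m) := by
          have : d'.val = ((m - 1 : ℕ) : ZMod m).val := by rw [hB]; omega
          exact ZMod.val_injective m this
        have hc' : c' = ((c'.val : ℕ) : ZMod m) := by
          rw [ZMod.natCast_val, ZMod.cast_id]
        have : c'.val ∈ S := ⟨by omega, by omega, Or.inr (by rw [← hc', ← hd']; exact hmem)⟩
        have := Nat.sInf_le this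
        omega
    rcases hDe with ⟨ha, hb⟩ | ⟨ha, hb⟩ <;> subst ha hb
    · -- Btw 0 c k ∧ Btw k d 0
      refine key c d hp ?_ ?_ ?_ <;>
        · simp only [Btw, vsub, hK, ZMod.val_zero] at h1 h2; split_ifs at h1 h2 <;> omega
    · -- Btw k c 0 ∧ Btw 0 d k : roles of c,d swapped
      refine key d c (by rwa [Sym2.eq_swap] at hp) ?_ ?_ ?_ <;>
        · simp only [Btw, vsub, hK, ZMod.val_zero] at h1 h2; split_ifs at h1 h2 <;> omega
  have : Δ ∪ {D} = Δ := by
    refine hmax _ Set.subset_union_left ?_ ?_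
    · rintro p (hp | rfl); exacts [hdiag p hp, hDdiag]
    · rintro p (hp | rfl) q (hq | rfl)
      exacts [hcr p hp q hq, fun h => hDnc p hp (crosses_symm h),
        hDnc q hq, not_crosses_self _]
  have : D ∈ Δ := by rw [← this]; exact Or.inr rfl
  exact this
end apex2

section glue

/-- gluing triangulations of the two sub-polygons along the apex triangle. -/
def glueSet (m k ℓ₂ : ℕ) [NeZero m] (Δ₁ : Set (Sym2 (ZMod (k + 1))))
    (Δ₂ : Set (Sym2 (ZMod (ℓ₂ + 1)))) : Set (Sym2 (ZMod m)) :=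
  Sym2.map (emb (0 : ZMod m) k) '' Δ₁ ∪ Sym2.map (emb ((k : ℕ) : ZMod m) ℓ₂) '' Δ₂ ∪
    {p | 2 ≤ k ∧ p = s((0 : ZMod m), ((k : ℕ) : ZMod m))} ∪
    {p | 2 ≤ ℓ₂ ∧ p = s(((k : ℕ) : ZMod m), ((k + ℓ₂ : ℕ) : ZMod m))}

/-- the triangulation induced on the sub-polygon given by the arc of length `ℓ` from `a`. -/
def restrictSet (m : ℕ) [NeZero m] (ℓ : ℕ) (a : ZMod m) (Δ : Set (Sym2 (ZMod m))) :
    Set (Sym2 (ZMod (ℓ + 1))) :=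
  {q | IsPolyDiag (ℓ + 1) q ∧ Sym2.map (emb a ℓ) q ∈ Δ}

variable {m : ℕ} [NeZero m] {k ℓ₂ : ℕ}

lemma val_K (hs : k + ℓ₂ + 1 = m) : ((k : ℕ) : ZMod m).val = k :=
  ZMod.val_cast_of_lt (by omega)

lemma val_B (hs : k + ℓ₂ + 1 = m) : ((k + ℓ₂ : ℕ) : ZMod m).val = k + ℓ₂ :=
  ZMod.val_cast_of_lt (by omega)

lemma val_e₁ (hs : k + ℓ₂ + 1 = m) (x : ZMod (k + 1)) :
    (emb (0 : ZMod m) k x).val = x.val := by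
  have hx := ZMod.val_lt x
  rw [emb, zero_add, ZMod.val_cast_of_lt (by omega)]

lemma val_e₂ (hs : k + ℓ₂ + 1 = m) (x : ZMod (ℓ₂ + 1)) :
    (emb ((k : ℕ) : ZMod m) ℓ₂ x).val = k + x.val := by
  have hx := ZMod.val_lt x
  rw [emb, ZMod.val_add_of_lt] <;>
    rw [val_K hs, ZMod.val_cast_of_lt (by omega)]
  omega

lemma side_map₁ (hs : k + ℓ₂ + 1 = m) (q : Sym2 (ZMod (k + 1))) :
    ∀ x ∈ Sym2.map (emb (0 : ZMod m) k) q, x.val ≤ k := by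
  intro x hx
  obtain ⟨y, -, rfl⟩ := Sym2.mem_map.mp hx
  have := ZMod.val_lt y
  rw [val_e₁ hs]; omega

lemma side_map₂ (hs : k + ℓ₂ + 1 = m) (q : Sym2 (ZMod (ℓ₂ + 1))) :
    ∀ x ∈ Sym2.map (emb ((k : ℕ) : ZMod m) ℓ₂) q, k ≤ x.val := by
  intro x hx
  obtain ⟨y, -, rfl⟩ := Sym2.mem_map.mp hx
  rw [val_e₂ hs]; omega

lemma emb_natCast {ℓ : ℕ} (a : ZMod m) {v : ℕ} (hv : v ≤ ℓ) :
    emb a ℓ ((v : ZMod (ℓ + 1))) = a + (v : ZMod m) := by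
  rw [emb, ZMod.val_cast_of_lt (by omega)]

lemma map_c₁ (hs : k + ℓ₂ + 1 = m) :
    Sym2.map (emb (0 : ZMod m) k) s((0 : ZMod (k + 1)), ((k : ℕ) : ZMod (k + 1)))
      = s((0 : ZMod m), ((k : ℕ) : ZMod m)) := by
  have h0 : emb (0 : ZMod m) k (0 : ZMod (k + 1)) = 0 := by rw [emb]; simp
  have h1 : emb (0 : ZMod m) k ((k : ℕ) : ZMod (k + 1)) = ((k : ℕ) : ZMod m) := by
    rw [emb_natCast _ (le_refl k), zero_add]
  rw [Sym2.map_pair_eq, h0, h1]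

lemma map_c₂ (hs : k + ℓ₂ + 1 = m) :
    Sym2.map (emb ((k : ℕ) : ZMod m) ℓ₂) s((0 : ZMod (ℓ₂ + 1)), ((ℓ₂ : ℕ) : ZMod (ℓ₂ + 1)))
      = s(((k : ℕ) : ZMod m), ((k + ℓ₂ : ℕ) : ZMod m)) := by
  have h0 : emb ((k : ℕ) : ZMod m) ℓ₂ (0 : ZMod (ℓ₂ + 1)) = ((k : ℕ) : ZMod m) := by
    rw [emb]; simp
  have h1 : emb ((k : ℕ) : ZMod m) ℓ₂ ((ℓ₂ : ℕ) : ZMod (ℓ₂ + 1))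
      = ((k + ℓ₂ : ℕ) : ZMod m) := by
    rw [emb_natCast _ (le_refl ℓ₂)]; push_cast; ring
  rw [Sym2.map_pair_eq, h0, h1]

lemma not_diag_border {M : ℕ} (hM : 1 ≤ M) :
    ¬ IsPolyDiag (M + 1) s((0 : ZMod (M + 1)), ((M : ℕ) : ZMod (M + 1))) := by
  rw [isPolyDiag_mk, vsub, vsub, ZMod.val_zero, ZMod.val_cast_of_lt (Nat.lt_succ_self M)]
  split_ifs <;> omega

lemma diag_C₁ (hs : k + ℓ₂ + 1 = m) (hl : 1 ≤ ℓ₂) (h2 : 2 ≤ k) :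
    IsPolyDiag m s((0 : ZMod m), ((k : ℕ) : ZMod m)) := by
  rw [isPolyDiag_mk, vsub, vsub, ZMod.val_zero, val_K hs]
  split_ifs <;> omega

lemma diag_C₂ (hs : k + ℓ₂ + 1 = m) (hk : 1 ≤ k) (h2 : 2 ≤ ℓ₂) :
    IsPolyDiag m s(((k : ℕ) : ZMod m), ((k + ℓ₂ : ℕ) : ZMod m)) := by
  rw [isPolyDiag_mk, vsub, vsub, val_K hs, val_B hs]
  split_ifs <;> omega

lemma diag_map₁ (hs : k + ℓ₂ + 1 = m) {q : Sym2 (ZMod (k + 1))}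
    (h : IsPolyDiag (k + 1) q) : IsPolyDiag m (Sym2.map (emb (0 : ZMod m) k) q) := by
  induction q using Sym2.ind with | _ x y =>
  rw [Sym2.map_pair_eq]
  exact diag_emb (by omega) _ h

lemma diag_map₂ (hs : k + ℓ₂ + 1 = m) {q : Sym2 (ZMod (ℓ₂ + 1))}
    (h : IsPolyDiag (ℓ₂ + 1) q) :
    IsPolyDiag m (Sym2.map (emb ((k : ℕ) : ZMod m) ℓ₂) q) := by
  induction q using Sym2.ind with | _ x y =>
  rw [Sym2.map_pair_eq]
  exact diag_emb (by omega) _ h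

lemma pull₁ (hs : k + ℓ₂ + 1 = m) {p : Sym2 (ZMod m)} (hd : IsPolyDiag m p)
    (hside : ∀ x ∈ p, x.val ≤ k) (hne : p ≠ s((0 : ZMod m), ((k : ℕ) : ZMod m))) :
    ∃ q, IsPolyDiag (k + 1) q ∧ Sym2.map (emb (0 : ZMod m) k) q = p := by
  induction p using Sym2.ind with | _ c d =>
  have hc := hside c (Sym2.mem_mk_left c d)
  have hd' := hside d (Sym2.mem_mk_right c d)
  have hemb : ∀ z : ZMod m, z.val ≤ k → emb (0 : ZMod m) k ((z.val : ZMod (k + 1))) = z := by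
    intro z hz
    rw [emb_natCast _ hz, zero_add, ZMod.natCast_val, ZMod.cast_id]
  refine ⟨s(((c.val : ℕ) : ZMod (k + 1)), ((d.val : ℕ) : ZMod (k + 1))), ?_, ?_⟩
  · have hne1 : ¬(c.val = 0 ∧ d.val = k) := by
      rintro ⟨h1, h2⟩
      exact hne (by rw [show c = 0 from val_inj (by rw [h1, ZMod.val_zero]),
        show d = ((k : ℕ) : ZMod m) from val_inj (by rw [h2, val_K hs])])
    have hne2 : ¬(c.val = k ∧ d.val = 0) := by
      rintro ⟨h1, h2⟩
      apply hne
      rw [show c = ((k : ℕ) : ZMod m) from val_inj (by rw [h1, val_K hs]),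
        show d = 0 from val_inj (by rw [h2, ZMod.val_zero]), Sym2.eq_swap]
    have hdg := isPolyDiag_mk.mp hd
    rw [vsub, vsub] at hdg
    rw [isPolyDiag_mk, vsub, vsub, ZMod.val_cast_of_lt (by omega),
      ZMod.val_cast_of_lt (by omega)]
    split_ifs at * <;> omega
  · rw [Sym2.map_pair_eq, hemb c hc, hemb d hd']

lemma pull₂ (hs : k + ℓ₂ + 1 = m) {p : Sym2 (ZMod m)} (hd : IsPolyDiag m p)
    (hside : ∀ x ∈ p, k ≤ x.val)
    (hne : p ≠ s(((k : ℕ) : ZMod m), ((k + ℓ₂ : ℕ) : ZMod m))) :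
    ∃ q, IsPolyDiag (ℓ₂ + 1) q ∧ Sym2.map (emb ((k : ℕ) : ZMod m) ℓ₂) q = p := by
  induction p using Sym2.ind with | _ c d =>
  have hc := hside c (Sym2.mem_mk_left c d)
  have hd' := hside d (Sym2.mem_mk_right c d)
  have hcv := ZMod.val_lt c
  have hdv := ZMod.val_lt d
  have hemb : ∀ z : ZMod m, k ≤ z.val →
      emb ((k : ℕ) : ZMod m) ℓ₂ (((z.val - k : ℕ) : ZMod (ℓ₂ + 1))) = z := by
    intro z hz
    have hzv := ZMod.val_lt z
    rw [emb_natCast _ (by omega), ← Nat.cast_add,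
      show k + (z.val - k) = z.val by omega, ZMod.natCast_val, ZMod.cast_id]
  refine ⟨s(((c.val - k : ℕ) : ZMod (ℓ₂ + 1)), ((d.val - k : ℕ) : ZMod (ℓ₂ + 1))), ?_, ?_⟩
  · have hne1 : ¬(c.val = k ∧ d.val = k + ℓ₂) := by
      rintro ⟨h1, h2⟩
      exact hne (by rw [show c = ((k : ℕ) : ZMod m) from val_inj (by rw [h1, val_K hs]),
        show d = ((k + ℓ₂ : ℕ) : ZMod m) from val_inj (by rw [h2, val_B hs])])
    have hne2 : ¬(c.val = k + ℓ₂ ∧ d.val = k) := by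
      rintro ⟨h1, h2⟩
      apply hne
      rw [show c = ((k + ℓ₂ : ℕ) : ZMod m) from val_inj (by rw [h1, val_B hs]),
        show d = ((k : ℕ) : ZMod m) from val_inj (by rw [h2, val_K hs]), Sym2.eq_swap]
    have hdg := isPolyDiag_mk.mp hd
    rw [vsub, vsub] at hdg
    rw [isPolyDiag_mk, vsub, vsub, ZMod.val_cast_of_lt (by omega),
      ZMod.val_cast_of_lt (by omega)]
    split_ifs at * <;> omega
  · rw [Sym2.map_pair_eq, hemb c hc, hemb d hd']

end glue

section main
variable {m : ℕ} [NeZero m] {k ℓ₂ : ℕ}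
  {Δ₁ : Set (Sym2 (ZMod (k + 1)))} {Δ₂ : Set (Sym2 (ZMod (ℓ₂ + 1)))}
  {Δ : Set (Sym2 (ZMod m))}

lemma mem_glue {p : Sym2 (ZMod m)} :
    p ∈ glueSet m k ℓ₂ Δ₁ Δ₂ ↔
      (∃ q ∈ Δ₁, Sym2.map (emb (0 : ZMod m) k) q = p) ∨
      (∃ q ∈ Δ₂, Sym2.map (emb ((k : ℕ) : ZMod m) ℓ₂) q = p) ∨
      (2 ≤ k ∧ p = s((0 : ZMod m), ((k : ℕ) : ZMod m))) ∨
      (2 ≤ ℓ₂ ∧ p = s(((k : ℕ) : ZMod m), ((k + ℓ₂ : ℕ) : ZMod m))) := by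
  constructor
  · rintro (((⟨q, hq, rfl⟩ | ⟨q, hq, rfl⟩) | h) | h)
    exacts [Or.inl ⟨q, hq, rfl⟩, Or.inr (Or.inl ⟨q, hq, rfl⟩),
      Or.inr (Or.inr (Or.inl h)), Or.inr (Or.inr (Or.inr h))]
  · rintro (⟨q, hq, rfl⟩ | ⟨q, hq, rfl⟩ | h | h)
    exacts [Or.inl (Or.inl (Or.inl ⟨q, hq, rfl⟩)), Or.inl (Or.inl (Or.inr ⟨q, hq, rfl⟩)),
      Or.inl (Or.inr h), Or.inr h]

lemma glue_cases (hs : k + ℓ₂ + 1 = m) {p : Sym2 (ZMod m)}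
    (hp : p ∈ glueSet m k ℓ₂ Δ₁ Δ₂) :
    (∃ q, (q ∈ Δ₁ ∨ (2 ≤ k ∧ q = s((0 : ZMod (k + 1)), ((k : ℕ) : ZMod (k + 1)))))
        ∧ p = Sym2.map (emb (0 : ZMod m) k) q) ∨
    (∃ q, (q ∈ Δ₂ ∨ (2 ≤ ℓ₂ ∧ q = s((0 : ZMod (ℓ₂ + 1)), ((ℓ₂ : ℕ) : ZMod (ℓ₂ + 1)))))
        ∧ p = Sym2.map (emb ((k : ℕ) : ZMod m) ℓ₂) q) := by
  rcases mem_glue.mp hp with ⟨q, hq, rfl⟩ | ⟨q, hq, rfl⟩ | ⟨h2, rfl⟩ | ⟨h2, rfl⟩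
  · exact Or.inl ⟨q, Or.inl hq, rfl⟩
  · exact Or.inr ⟨q, Or.inl hq, rfl⟩
  · exact Or.inl ⟨_, Or.inr ⟨h2, rfl⟩, (map_c₁ hs).symm⟩
  · exact Or.inr ⟨_, Or.inr ⟨h2, rfl⟩, (map_c₂ hs).symm⟩

lemma glue_nc (hs : k + ℓ₂ + 1 = m) (hk : 1 ≤ k) (hl : 1 ≤ ℓ₂)
    (hnc₁ : ∀ p ∈ Δ₁, ∀ q ∈ Δ₁, ¬ Crosses (k + 1) p q)
    (hnc₂ : ∀ p ∈ Δ₂, ∀ q ∈ Δ₂, ¬ Crosses (ℓ₂ + 1) p q) :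
    ∀ p ∈ glueSet m k ℓ₂ Δ₁ Δ₂, ∀ q ∈ glueSet m k ℓ₂ Δ₁ Δ₂, ¬ Crosses m p q := by
  intro p hp q hq hC
  rcases glue_cases hs hp with ⟨q₁, hq₁, rfl⟩ | ⟨q₁, hq₁, rfl⟩ <;>
    rcases glue_cases hs hq with ⟨q₂, hq₂, rfl⟩ | ⟨q₂, hq₂, rfl⟩
  · have hsm := (crosses_emb (show k < m by omega) _ q₁ q₂).mp hC
    rcases hq₁ with h₁ | ⟨h2, rfl⟩ <;> rcases hq₂ with h₂ | ⟨h2', rfl⟩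
    · exact hnc₁ _ h₁ _ h₂ hsm
    · exact not_diag_border (by omega) (crosses_diag hsm).2
    · exact not_diag_border (by omega) (crosses_diag hsm).1
    · exact not_crosses_self _ hsm
  · exact not_crosses_sep (side_map₁ hs q₁) (side_map₂ hs q₂) hC
  · exact not_crosses_sep (side_map₁ hs q₂) (side_map₂ hs q₁) (crosses_symm hC)
  · have hsm := (crosses_emb (show ℓ₂ < m by omega) _ q₁ q₂).mp hC
    rcases hq₁ with h₁ | ⟨h2, rfl⟩ <;> rcases hq₂ with h₂ | ⟨h2', rfl⟩
    · exact hnc₂ _ h₁ _ h₂ hsm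
    · exact not_diag_border (by omega) (crosses_diag hsm).2
    · exact not_diag_border (by omega) (crosses_diag hsm).1
    · exact not_crosses_self _ hsm

lemma glue_diag (hs : k + ℓ₂ + 1 = m) (hk : 1 ≤ k) (hl : 1 ≤ ℓ₂)
    (hd₁ : ∀ p ∈ Δ₁, IsPolyDiag (k + 1) p) (hd₂ : ∀ p ∈ Δ₂, IsPolyDiag (ℓ₂ + 1) p) :
    ∀ p ∈ glueSet m k ℓ₂ Δ₁ Δ₂, IsPolyDiag m p := by
  intro p hp
  rcases mem_glue.mp hp with ⟨q, hq, rfl⟩ | ⟨q, hq, rfl⟩ | ⟨h2, rfl⟩ | ⟨h2, rfl⟩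
  · exact diag_map₁ hs (hd₁ _ hq)
  · exact diag_map₂ hs (hd₂ _ hq)
  · exact diag_C₁ hs hl h2
  · exact diag_C₂ hs hk h2

lemma hBe (hs : k + ℓ₂ + 1 = m) :
    ((m - 1 : ℕ) : ZMod m) = ((k + ℓ₂ : ℕ) : ZMod m) := by
  rw [show m - 1 = k + ℓ₂ by omega]

lemma glue_apex (hs : k + ℓ₂ + 1 = m) (hk : 1 ≤ k) (hl : 1 ≤ ℓ₂) :
    IsApex m k (glueSet m k ℓ₂ Δ₁ Δ₂) := by
  refine ⟨hk, by omega, fun h2 => mem_glue.mpr (Or.inr (Or.inr (Or.inl ⟨h2, rfl⟩))),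
    fun h3 => mem_glue.mpr (Or.inr (Or.inr (Or.inr ⟨by omega, by rw [hBe hs]⟩)))⟩

lemma glue_isTri (hs : k + ℓ₂ + 1 = m) (hk : 1 ≤ k) (hl : 1 ≤ ℓ₂)
    (hT₁ : IsTriangulation (k + 1) Δ₁) (hT₂ : IsTriangulation (ℓ₂ + 1) Δ₂) :
    IsTriangulation m (glueSet m k ℓ₂ Δ₁ Δ₂) := by
  have hm3 : 3 ≤ m := by omega
  refine ⟨glue_diag hs hk hl hT₁.1 hT₂.1, glue_nc hs hk hl hT₁.2.1 hT₂.2.1, ?_⟩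
  intro Δ' hsub hdiag' hnc'
  apply Set.Subset.antisymm _ hsub
  intro p hp
  have hsplit := side_split hm3 hk (by omega) hnc' hdiag'
    (fun h2 => hsub (mem_glue.mpr (Or.inr (Or.inr (Or.inl ⟨h2, rfl⟩)))))
    (fun h3 => hsub (mem_glue.mpr (Or.inr (Or.inr (Or.inr ⟨by omega, by rw [hBe hs]⟩)))))
    hp
  rcases hsplit with hside | hside
  · by_cases hne : p = s((0 : ZMod m), ((k : ℕ) : ZMod m))
    · have h2 : 2 ≤ k := by
        have := isPolyDiag_mk.mp (by rw [← hne]; exact hdiag' _ hp)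
        rw [vsub, vsub, ZMod.val_zero, val_K hs] at this
        split_ifs at this <;> omega
      exact mem_glue.mpr (Or.inr (Or.inr (Or.inl ⟨h2, hne⟩)))
    · obtain ⟨q, hqd, hqe⟩ := pull₁ hs (hdiag' _ hp) hside hne
      have hq₁ : q ∈ Δ₁ := by
        have heq : Δ₁ ∪ {q} = Δ₁ := by
          refine hT₁.2.2 _ Set.subset_union_left ?_ ?_
          · rintro r (hr | rfl); exacts [hT₁.1 _ hr, hqd]
          · have key : ∀ r ∈ Δ₁, ¬ Crosses (k + 1) q r := by
              intro r hr hC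
              have := (crosses_emb (show k < m by omega) (0 : ZMod m) q r).mpr hC
              rw [hqe] at this
              exact hnc' _ hp _ (hsub (mem_glue.mpr (Or.inl ⟨r, hr, rfl⟩))) this
            rintro r (hr | rfl) r' (hr' | rfl)
            exacts [hT₁.2.1 _ hr _ hr', fun hC => key _ hr (crosses_symm hC),
              key _ hr', not_crosses_self _]
        rw [← heq]; exact Or.inr rfl
      exact mem_glue.mpr (Or.inl ⟨q, hq₁, hqe⟩)
  · by_cases hne : p = s(((k : ℕ) : ZMod m), ((k + ℓ₂ : ℕ) : ZMod m))
    · have h2 : 2 ≤ ℓ₂ := by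
        have := isPolyDiag_mk.mp (by rw [← hne]; exact hdiag' _ hp)
        rw [vsub, vsub, val_K hs, val_B hs] at this
        split_ifs at this <;> omega
      exact mem_glue.mpr (Or.inr (Or.inr (Or.inr ⟨h2, hne⟩)))
    · obtain ⟨q, hqd, hqe⟩ := pull₂ hs (hdiag' _ hp) hside hne
      have hq₂ : q ∈ Δ₂ := by
        have heq : Δ₂ ∪ {q} = Δ₂ := by
          refine hT₂.2.2 _ Set.subset_union_left ?_ ?_
          · rintro r (hr | rfl); exacts [hT₂.1 _ hr, hqd]
          · have key : ∀ r ∈ Δ₂, ¬ Crosses (ℓ₂ + 1) q r := by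
              intro r hr hC
              have := (crosses_emb (show ℓ₂ < m by omega) (((k : ℕ)) : ZMod m) q r).mpr hC
              rw [hqe] at this
              exact hnc' _ hp _ (hsub (mem_glue.mpr (Or.inr (Or.inl ⟨r, hr, rfl⟩)))) this
            rintro r (hr | rfl) r' (hr' | rfl)
            exacts [hT₂.2.1 _ hr _ hr', fun hC => key _ hr (crosses_symm hC),
              key _ hr', not_crosses_self _]
        rw [← heq]; exact Or.inr rfl
      exact mem_glue.mpr (Or.inr (Or.inl ⟨q, hq₂, hqe⟩))

end main

section restrictsec
variable {m : ℕ} [NeZero m] {k ℓ₂ : ℕ}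
  {Δ₁ : Set (Sym2 (ZMod (k + 1)))} {Δ₂ : Set (Sym2 (ZMod (ℓ₂ + 1)))}
  {Δ : Set (Sym2 (ZMod m))}

lemma restrict_isTri₁ (hs : k + ℓ₂ + 1 = m) (hk : 1 ≤ k) (hl : 1 ≤ ℓ₂)
    (hT : IsTriangulation m Δ) (hap : IsApex m k Δ) :
    IsTriangulation (k + 1) (restrictSet m k (0 : ZMod m) Δ) := by
  obtain ⟨hdiag, hnc, hmax⟩ := hT
  have hm3 : 3 ≤ m := by omega
  refine ⟨fun q hq => hq.1, ?_, ?_⟩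
  · intro q hq r hr hC
    exact hnc _ hq.2 _ hr.2 ((crosses_emb (show k < m by omega) _ q r).mpr hC)
  · intro Δ' hsub hdiag' hnc'
    apply Set.Subset.antisymm _ hsub
    intro q hq
    have hqd := hdiag' _ hq
    have key : ∀ p ∈ Δ, ¬ Crosses m (Sym2.map (emb (0 : ZMod m) k) q) p := by
      intro p hp hC
      rcases side_split hm3 hk (by omega) hnc hdiag hap.2.2.1 hap.2.2.2 hp
        with hside | hside
      · by_cases hne : p = s((0 : ZMod m), ((k : ℕ) : ZMod m))
        · rw [hne, ← map_c₁ hs] at hC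
          exact not_diag_border (by omega)
            (crosses_diag ((crosses_emb (show k < m by omega) _ _ _).mp hC)).2
        · obtain ⟨r, hrd, hre⟩ := pull₁ hs (hdiag _ hp) hside hne
          rw [← hre] at hC
          exact hnc' _ hq _ (hsub ⟨hrd, by rw [hre]; exact hp⟩)
            ((crosses_emb (show k < m by omega) _ q r).mp hC)
      · exact not_crosses_sep (side_map₁ hs q) hside hC
    have heq : Δ ∪ {Sym2.map (emb (0 : ZMod m) k) q} = Δ := by
      refine hmax _ Set.subset_union_left ?_ ?_
      · rintro p (hp | rfl); exacts [hdiag _ hp, diag_map₁ hs hqd]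
      · rintro p (hp | rfl) r (hr | rfl)
        exacts [hnc _ hp _ hr, fun hC => key _ hp (crosses_symm hC),
          key _ hr, not_crosses_self _]
    exact ⟨hqd, by rw [← heq]; exact Or.inr rfl⟩

lemma restrict_isTri₂ (hs : k + ℓ₂ + 1 = m) (hk : 1 ≤ k) (hl : 1 ≤ ℓ₂)
    (hT : IsTriangulation m Δ) (hap : IsApex m k Δ) :
    IsTriangulation (ℓ₂ + 1) (restrictSet m ℓ₂ ((k : ℕ) : ZMod m) Δ) := by
  obtain ⟨hdiag, hnc, hmax⟩ := hT
  have hm3 : 3 ≤ m := by omega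
  refine ⟨fun q hq => hq.1, ?_, ?_⟩
  · intro q hq r hr hC
    exact hnc _ hq.2 _ hr.2 ((crosses_emb (show ℓ₂ < m by omega) _ q r).mpr hC)
  · intro Δ' hsub hdiag' hnc'
    apply Set.Subset.antisymm _ hsub
    intro q hq
    have hqd := hdiag' _ hq
    have key : ∀ p ∈ Δ, ¬ Crosses m (Sym2.map (emb ((k : ℕ) : ZMod m) ℓ₂) q) p := by
      intro p hp hC
      rcases side_split hm3 hk (by omega) hnc hdiag hap.2.2.1 hap.2.2.2 hp
        with hside | hside
      · exact not_crosses_sep hside (side_map₂ hs q) (crosses_symm hC)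
      · by_cases hne : p = s(((k : ℕ) : ZMod m), ((k + ℓ₂ : ℕ) : ZMod m))
        · rw [hne, ← map_c₂ hs] at hC
          exact not_diag_border (by omega)
            (crosses_diag ((crosses_emb (show ℓ₂ < m by omega) _ _ _).mp hC)).2
        · obtain ⟨r, hrd, hre⟩ := pull₂ hs (hdiag _ hp) hside hne
          rw [← hre] at hC
          exact hnc' _ hq _ (hsub ⟨hrd, by rw [hre]; exact hp⟩)
            ((crosses_emb (show ℓ₂ < m by omega) _ q r).mp hC)
    have heq : Δ ∪ {Sym2.map (emb ((k : ℕ) : ZMod m) ℓ₂) q} = Δ := by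
      refine hmax _ Set.subset_union_left ?_ ?_
      · rintro p (hp | rfl); exacts [hdiag _ hp, diag_map₂ hs hqd]
      · rintro p (hp | rfl) r (hr | rfl)
        exacts [hnc _ hp _ hr, fun hC => key _ hp (crosses_symm hC),
          key _ hr, not_crosses_self _]
    exact ⟨hqd, by rw [← heq]; exact Or.inr rfl⟩

lemma glue_restrict (hs : k + ℓ₂ + 1 = m) (hk : 1 ≤ k) (hl : 1 ≤ ℓ₂)
    (hT : IsTriangulation m Δ) (hap : IsApex m k Δ) :
    glueSet m k ℓ₂ (restrictSet m k (0 : ZMod m) Δ)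
      (restrictSet m ℓ₂ ((k : ℕ) : ZMod m) Δ) = Δ := by
  obtain ⟨hdiag, hnc, hmax⟩ := hT
  have hm3 : 3 ≤ m := by omega
  apply Set.Subset.antisymm
  · intro p hp
    rcases mem_glue.mp hp with ⟨q, hq, rfl⟩ | ⟨q, hq, rfl⟩ | ⟨h2, rfl⟩ | ⟨h2, rfl⟩
    · exact hq.2
    · exact hq.2
    · exact hap.2.2.1 h2
    · have := hap.2.2.2 (by omega)
      rwa [hBe hs] at this
  · intro p hp
    rcases side_split hm3 hk (by omega) hnc hdiag hap.2.2.1 hap.2.2.2 hp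
      with hside | hside
    · by_cases hne : p = s((0 : ZMod m), ((k : ℕ) : ZMod m))
      · have h2 : 2 ≤ k := by
          have := isPolyDiag_mk.mp (by rw [← hne]; exact hdiag _ hp)
          rw [vsub, vsub, ZMod.val_zero, val_K hs] at this
          split_ifs at this <;> omega
        exact mem_glue.mpr (Or.inr (Or.inr (Or.inl ⟨h2, hne⟩)))
      · obtain ⟨q, hqd, hqe⟩ := pull₁ hs (hdiag _ hp) hside hne
        exact mem_glue.mpr (Or.inl ⟨q, ⟨hqd, by rw [hqe]; exact hp⟩, hqe⟩)
    · by_cases hne : p = s(((k : ℕ) : ZMod m), ((k + ℓ₂ : ℕ) : ZMod m))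
      · have h2 : 2 ≤ ℓ₂ := by
          have := isPolyDiag_mk.mp (by rw [← hne]; exact hdiag _ hp)
          rw [vsub, vsub, val_K hs, val_B hs] at this
          split_ifs at this <;> omega
        exact mem_glue.mpr (Or.inr (Or.inr (Or.inr ⟨h2, hne⟩)))
      · obtain ⟨q, hqd, hqe⟩ := pull₂ hs (hdiag _ hp) hside hne
        exact mem_glue.mpr (Or.inr (Or.inl ⟨q, ⟨hqd, by rw [hqe]; exact hp⟩, hqe⟩))

lemma restrict_glue₁ (hs : k + ℓ₂ + 1 = m) (hk : 1 ≤ k) (hl : 1 ≤ ℓ₂)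
    (hd₁ : ∀ p ∈ Δ₁, IsPolyDiag (k + 1) p) :
    restrictSet m k (0 : ZMod m) (glueSet m k ℓ₂ Δ₁ Δ₂) = Δ₁ := by
  apply Set.Subset.antisymm
  · rintro q ⟨hqd, hqm⟩
    rcases glue_cases hs hqm with ⟨r, hr, he⟩ | ⟨r, hr, he⟩
    · have hqr : q = r := Sym2.map.injective (emb_inj (show k < m by omega) _) he
      subst hqr
      rcases hr with h | ⟨h2, rfl⟩
      · exact h
      · exact absurd hqd (not_diag_border (by omega))
    · exfalso
      induction q using Sym2.ind with | _ x y =>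
      have hmem : ∀ z : ZMod (k + 1), emb (0 : ZMod m) k z ∈
          Sym2.map (emb ((k : ℕ) : ZMod m) ℓ₂) r → k ≤ z.val := by
        intro z hz
        have := side_map₂ hs r _ hz
        rwa [val_e₁ hs] at this
      have hx : k ≤ x.val := hmem x (by rw [← he, Sym2.map_pair_eq]; exact Sym2.mem_mk_left _ _)
      have hy : k ≤ y.val := hmem y (by rw [← he, Sym2.map_pair_eq]; exact Sym2.mem_mk_right _ _)
      have hxv := ZMod.val_lt x
      have hyv := ZMod.val_lt y
      have hxy : x = y := ZMod.val_injective _ (by omega)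
      subst hxy
      have := (isPolyDiag_mk.mp hqd).1
      rw [sub_self, ZMod.val_zero] at this
      omega
  · intro q hq
    exact ⟨hd₁ _ hq, mem_glue.mpr (Or.inl ⟨q, hq, rfl⟩)⟩

lemma restrict_glue₂ (hs : k + ℓ₂ + 1 = m) (hk : 1 ≤ k) (hl : 1 ≤ ℓ₂)
    (hd₂ : ∀ p ∈ Δ₂, IsPolyDiag (ℓ₂ + 1) p) :
    restrictSet m ℓ₂ ((k : ℕ) : ZMod m) (glueSet m k ℓ₂ Δ₁ Δ₂) = Δ₂ := by
  apply Set.Subset.antisymm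
  · rintro q ⟨hqd, hqm⟩
    rcases glue_cases hs hqm with ⟨r, hr, he⟩ | ⟨r, hr, he⟩
    · exfalso
      induction q using Sym2.ind with | _ x y =>
      have hmem : ∀ z : ZMod (ℓ₂ + 1), emb ((k : ℕ) : ZMod m) ℓ₂ z ∈
          Sym2.map (emb (0 : ZMod m) k) r → (emb ((k : ℕ) : ZMod m) ℓ₂ z).val ≤ k :=
        fun z hz => side_map₁ hs r _ hz
      have hx : x.val = 0 := by
        have := hmem x (by rw [← he, Sym2.map_pair_eq]; exact Sym2.mem_mk_left _ _)
        rw [val_e₂ hs] at this; omega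
      have hy : y.val = 0 := by
        have := hmem y (by rw [← he, Sym2.map_pair_eq]; exact Sym2.mem_mk_right _ _)
        rw [val_e₂ hs] at this; omega
      have hxy : x = y := ZMod.val_injective _ (by omega)
      subst hxy
      have := (isPolyDiag_mk.mp hqd).1
      rw [sub_self, ZMod.val_zero] at this
      omega
    · have hqr : q = r := Sym2.map.injective (emb_inj (show ℓ₂ < m by omega) _) he
      subst hqr
      rcases hr with h | ⟨h2, rfl⟩
      · exact h
      · exact absurd hqd (not_diag_border (by omega))
  · intro q hq
    exact ⟨hd₂ _ hq, mem_glue.mpr (Or.inr (Or.inl ⟨q, hq, rfl⟩))⟩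

end restrictsec

section count

noncomputable def triCard (M : ℕ) : ℕ :=
  Nat.card {Δ : Set (Sym2 (ZMod M)) // IsTriangulation M Δ}

lemma triangulation_two (Δ : Set (Sym2 (ZMod 2))) : IsTriangulation 2 Δ ↔ Δ = ∅ := by
  have empty_of : ∀ Δ' : Set (Sym2 (ZMod 2)), (∀ p ∈ Δ', IsPolyDiag 2 p) → Δ' = ∅ := by
    intro Δ' hdiag
    ext p
    simp only [Set.mem_empty_iff_false, iff_false]
    intro hp
    induction p using Sym2.ind with | _ a b =>
    have h1 := (isPolyDiag_mk.mp (hdiag _ hp)).1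
    have h2 := ZMod.val_lt (b - a)
    omega
  constructor
  · intro hT
    exact empty_of Δ hT.1
  · rintro rfl
    refine ⟨by simp, by simp, ?_⟩
    intro Δ' _ hdiag _
    exact empty_of Δ' hdiag

lemma triCard_two : triCard 2 = 1 := by
  rw [triCard, Nat.card_eq_one_iff_unique]
  constructor
  · exact ⟨fun a b => Subtype.ext (by rw [(triangulation_two _).mp a.2,
      (triangulation_two _).mp b.2])⟩
  · exact ⟨∅, (triangulation_two ∅).mpr rfl⟩

lemma card_sigma_fin {N : ℕ} (β : Fin N → Type) [∀ j, Finite (β j)] :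
    Nat.card ((j : Fin N) × β j) = ∑ j, Nat.card (β j) := by
  letI := fun j => Fintype.ofFinite (β j)
  rw [Nat.card_eq_fintype_card, Fintype.card_sigma]
  exact Finset.sum_congr rfl fun j _ => (Nat.card_eq_fintype_card).symm

lemma triCard_rec (n : ℕ) :
    triCard (n + 3)
      = ∑ j : Fin (n + 1), triCard (j.val + 1 + 1) * triCard ((n + 1 - j.val) + 1) := by
  classical
  set X := {Δ : Set (Sym2 (ZMod (n + 3))) // IsTriangulation (n + 3) Δ} with hX
  set Y := (j : Fin (n + 1)) ×
    ({Δ₁ : Set (Sym2 (ZMod (j.val + 1 + 1))) // IsTriangulation (j.val + 1 + 1) Δ₁} ×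
     {Δ₂ : Set (Sym2 (ZMod ((n + 1 - j.val) + 1))) //
        IsTriangulation ((n + 1 - j.val) + 1) Δ₂}) with hY
  have hs : ∀ j : Fin (n + 1), (j.val + 1) + (n + 1 - j.val) + 1 = n + 3 := by
    intro j; have := j.isLt; omega
  have hl : ∀ j : Fin (n + 1), 1 ≤ n + 1 - j.val := by
    intro j; have := j.isLt; omega
  have hm3 : (3 : ℕ) ≤ n + 3 := by omega
  let g : Y → X := fun y =>
    ⟨glueSet (n + 3) (y.1.val + 1) (n + 1 - y.1.val) y.2.1.1 y.2.2.1,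
      glue_isTri (hs y.1) (by omega) (hl y.1) y.2.1.2 y.2.2.2⟩
  have hginj : Function.Injective g := by
    rintro ⟨j, a, b⟩ ⟨j', a', b'⟩ heq
    have hG : glueSet (n + 3) (j.val + 1) (n + 1 - j.val) a.1 b.1
        = glueSet (n + 3) (j'.val + 1) (n + 1 - j'.val) a'.1 b'.1 :=
      congrArg Subtype.val heq
    have hap : IsApex (n + 3) (j.val + 1)
        (glueSet (n + 3) (j.val + 1) (n + 1 - j.val) a.1 b.1) :=
      glue_apex (hs j) (by omega) (hl j)
    have hap' : IsApex (n + 3) (j'.val + 1)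
        (glueSet (n + 3) (j.val + 1) (n + 1 - j.val) a.1 b.1) := by
      rw [hG]; exact glue_apex (hs j') (by omega) (hl j')
    have hnc := (glue_isTri (hs j) (by omega) (hl j) a.2 b.2).2.1
    have hjj : j = j' := Fin.ext (by
      have := apex_unique hm3 hnc hap hap'
      omega)
    subst hjj
    have ha : a = a' := Subtype.ext (by
      have h1 := restrict_glue₁ (Δ₂ := b.1) (hs j) (by omega) (hl j) a.2.1
      have h2 := restrict_glue₁ (Δ₂ := b'.1) (hs j) (by omega) (hl j) a'.2.1
      rw [← h1, ← h2, hG])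
    have hb : b = b' := Subtype.ext (by
      have h1 := restrict_glue₂ (Δ₁ := a.1) (hs j) (by omega) (hl j) b.2.1
      have h2 := restrict_glue₂ (Δ₁ := a'.1) (hs j) (by omega) (hl j) b'.2.1
      rw [← h1, ← h2, hG])
    rw [ha, hb]
  have hgsurj : Function.Surjective g := by
    rintro ⟨Δ, hT⟩
    obtain ⟨k, hap⟩ := apex_exists hm3 hT
    have hk1 := hap.1
    have hk2 : k ≤ n + 1 := by have := hap.2.1; omega
    set j : Fin (n + 1) := ⟨k - 1, by omega⟩ with hj
    have hjval : (j : ℕ) = k - 1 := rfl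
    have e0 : (j : ℕ) + 1 = k := by rw [hjval]; omega
    have hap' : IsApex (n + 3) ((j : ℕ) + 1) Δ := by rw [e0]; exact hap
    have es : ((j : ℕ) + 1) + (n + 1 - (j : ℕ)) + 1 = n + 3 := hs j
    refine ⟨⟨j, ⟨restrictSet (n + 3) ((j : ℕ) + 1) (0 : ZMod (n + 3)) Δ,
        restrict_isTri₁ es (by omega) (hl j) hT hap'⟩,
      ⟨restrictSet (n + 3) (n + 1 - (j : ℕ)) (((j : ℕ) + 1 : ℕ) : ZMod (n + 3)) Δ,
        restrict_isTri₂ es (by omega) (hl j) hT hap'⟩⟩, ?_⟩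
    exact Subtype.ext (glue_restrict es (by omega) (hl j) hT hap')
  have hcard : Nat.card Y = Nat.card X := Nat.card_eq_of_bijective g ⟨hginj, hgsurj⟩
  rw [triCard, ← hcard, hY, card_sigma_fin]
  exact Finset.sum_congr rfl fun j _ => by rw [Nat.card_prod]; rfl

lemma triCard_catalan (n : ℕ) : triCard (n + 2) = catalan n := by
  induction n using Nat.strong_induction_on with | _ n ih =>
  match n with
  | 0 => rw [triCard_two, catalan_zero]
  | Nat.succ n =>
    rw [show n + 1 + 2 = n + 3 from rfl, triCard_rec n, catalan_succ]
    refine Finset.sum_congr rfl fun j _ => ?_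
    have hj := j.isLt
    rw [show (j : ℕ) + 1 + 1 = (j : ℕ) + 2 from rfl, ih j.val (by omega),
      show (n + 1 - j.val) + 1 = (n - j.val) + 2 from by omega, ih (n - j.val) (by omega)]

lemma catalanC_eq (n : ℕ) : catalanC n = catalan n := by
  have h1 : (n + 1) * catalan n = n.centralBinom := succ_mul_catalan_eq_centralBinom n
  have h2 : n.centralBinom * n.factorial * n.factorial = (2 * n).factorial := by
    have := Nat.choose_mul_factorial_mul_factorial (show n ≤ 2 * n by omega)
    rw [Nat.centralBinom]
    rw [show 2 * n - n = n from by omega] at this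
    exact this
  have hfact : (2 * n).factorial = catalan n * ((n + 1).factorial * n.factorial) := by
    rw [Nat.factorial_succ, ← h2, ← h1]
    ring
  rw [catalanC, hfact, Nat.mul_div_cancel]
  positivity
end count


/-- The number of triangulations of a convex polygon with `n+2` vertices is the `n`-th
Catalan number `(2n)!/((n+1)!·n!)`. -/
theorem card_triangulations (n : ℕ) :
    Nat.card {Δ : Set (Sym2 (ZMod (n + 2))) // IsTriangulation (n + 2) Δ} = catalanC n := by
  rw [catalanC_eq]
  exact triCard_catalan n

end CTA
end

section
/- For n ≥ 1, no triangulation of a convex (n+3)-gon is fixed by the rotation through one vertex; equivalently, every orbit of the rotation action on triangulations has size at least 2. -/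
namespace CTA

theorem nonempty_of_triangulation (n : ℕ) (hn : 1 ≤ n) (Δ : Set (Sym2 (ZMod (n + 3))))
    (hΔ : IsTriangulation (n + 3) Δ) : Δ.Nonempty := by
  rw [Set.nonempty_iff_ne_empty]
  intro hempty
  subst hempty
  have h2v : (2 : ZMod (n + 3)).val = 2 := by
    have : ((2 : ℕ) : ZMod (n + 3)).val = 2 := ZMod.val_cast_of_lt (by omega)
    simpa using this
  have h20 : (2 : ZMod (n + 3)) ≠ 0 := by
    intro h
    rw [h, ZMod.val_zero] at h2v
    omega
  have hneg : (-2 : ZMod (n + 3)).val = n + 1 := by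
    have := ZMod.neg_val (2 : ZMod (n + 3))
    rw [this, if_neg h20, h2v]
    omega
  have hdiag : IsPolyDiag (n + 3) s((0 : ZMod (n + 3)), 2) := by
    intro a b hab
    rw [Sym2.eq_iff] at hab
    rcases hab with ⟨ha, hb⟩ | ⟨ha, hb⟩ <;> subst ha <;> subst hb <;>
      simp [sub_zero, zero_sub, h2v, hneg] <;> omega
  have := hΔ.2.2 {s((0 : ZMod (n + 3)), 2)} (by simp) ?_ ?_
  · exact absurd this (by simp [Set.eq_empty_iff_forall_notMem])
  · intro p hp
    simp at hp
    subst hp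
    exact hdiag
  · intro p hp q hq hc
    simp at hp hq
    subst hp; subst hq
    obtain ⟨a, b, c, d, hab, hcd, ⟨hc1, hc2⟩, _⟩ := hc
    rw [Sym2.eq_iff] at hab hcd
    rcases hab with ⟨ha, hb⟩ | ⟨ha, hb⟩ <;> rcases hcd with ⟨hc', hd⟩ | ⟨hc', hd⟩ <;>
      subst ha <;> subst hb <;> subst hc' <;> subst hd <;>
      simp [sub_self, sub_zero, zero_sub, h2v, hneg] at hc1 hc2 <;> omega

theorem not_fixed (n : ℕ) (hn : 1 ≤ n) (Δ : Set (Sym2 (ZMod (n + 3))))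
    (hΔ : IsTriangulation (n + 3) Δ) : rotate (n + 3) 1 Δ ≠ Δ := by
  intro hfix
  obtain ⟨p, hp⟩ := nonempty_of_triangulation n hn Δ hΔ
  induction p using Sym2.ind with
  | _ a b =>
  obtain ⟨h1, h2⟩ := hΔ.1 _ hp a b rfl
  have hq : s(a + 1, b + 1) ∈ Δ := by
    rw [← hfix]
    exact ⟨s(a, b), hp, by simp [Sym2.map_pair_eq]⟩
  have h1v : (1 : ZMod (n + 3)).val = 1 := by
    have : ((1 : ℕ) : ZMod (n + 3)).val = 1 := ZMod.val_cast_of_lt (by omega)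
    simpa using this
  refine hΔ.2.1 _ hp _ hq ⟨a, b, a + 1, b + 1, rfl, rfl, ?_, ?_⟩
  · constructor
    · rw [add_sub_cancel_left, h1v]; omega
    · rw [add_sub_cancel_left, h1v]; omega
  · constructor
    · rw [add_sub_cancel_left, h1v]; omega
    · rw [add_sub_cancel_left, h1v]; omega

/-- For `n ≥ 1`, no triangulation of the `(n+3)`-gon is fixed by the rotation through one
vertex; equivalently every rotation orbit has size at least `2`. -/
theorem orbit_size_ge_two (n : ℕ) (hn : 1 ≤ n) (Δ : Set (Sym2 (ZMod (n + 3))))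
    (hΔ : IsTriangulation (n + 3) Δ) :
    rotate (n + 3) 1 Δ ≠ Δ ∧ 2 ≤ (rotOrbit (n + 3) Δ).ncard := by
  have hne := not_fixed n hn Δ hΔ
  refine ⟨hne, ?_⟩
  have hfin : (rotOrbit (n + 3) Δ).Finite := by
    apply (Set.finite_range (fun k : ZMod (n + 3) => rotate (n + 3) k Δ)).subset
    rintro Δ' ⟨k, rfl⟩
    exact ⟨k, rfl⟩
  have hΔmem : Δ ∈ rotOrbit (n + 3) Δ := by
    refine ⟨0, ?_⟩
    have : (fun x : ZMod (n + 3) => x + 0) = id := by funext x; simp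
    simp [rotate, this, Sym2.map_id]
  have hrmem : rotate (n + 3) 1 Δ ∈ rotOrbit (n + 3) Δ := ⟨1, rfl⟩
  rw [show (2 : ℕ) = 1 + 1 from rfl]
  exact Set.one_lt_ncard_iff hfin |>.2 ⟨_, _, hrmem, hΔmem, hne⟩

end CTA
end

section
/- In any triangulation of a convex polygon with at least 4 vertices, there exists a diagonal that is close to the border, i.e., a diagonal whose two endpoints are at distance exactly 2 along the boundary. -/
namespace CTA

section helpers
set_option linter.unusedSectionVars false
variable {m : ℕ} [NeZero m]

lemma vadd {a x b : ZMod m} (h : (x - a).val < (b - a).val) :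
    (b - a).val = (x - a).val + (b - x).val := by
  have e : b - a = (x - a) + (b - x) := by ring
  have h1 := ZMod.val_add (x - a) (b - x)
  rw [← e] at h1
  have l1 : (x - a).val < m := ZMod.val_lt _
  have l2 : (b - x).val < m := ZMod.val_lt _
  rcases lt_or_ge ((x - a).val + (b - x).val) m with hs | hs
  · rw [Nat.mod_eq_of_lt hs] at h1; omega
  · have : ((x - a).val + (b - x).val) % m = (x - a).val + (b - x).val - m := by
      rw [Nat.mod_eq_sub_mod hs, Nat.mod_eq_of_lt (by omega)]
    omega

lemma vneg {a b : ZMod m} (h : b ≠ a) : (b - a).val + (a - b).val = m := by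
  have h0 : b - a ≠ 0 := sub_ne_zero.mpr h
  have e : a - b = -(b - a) := by ring
  rw [e, ZMod.neg_val]
  simp only [h0, if_false]
  have := ZMod.val_lt (b - a)
  have : 0 < (b - a).val := ZMod.val_pos.mpr h0
  omega

lemma sub_val_eq {a b c : ZMod m} (h : (b - a).val = (c - a).val) : b = c :=
  sub_left_injective (ZMod.val_injective _ h)

lemma vpos {a b : ZMod m} (h : 0 < (b - a).val) : b ≠ a :=
  fun he => by simp [he] at h

end helpers

/-- Any triangulation of a convex polygon with at least `4` vertices contains a diagonal
close to the border. -/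
theorem exists_close_border (m : ℕ) (hm : 4 ≤ m) (Δ : Set (Sym2 (ZMod m)))
    (hΔ : IsTriangulation m Δ) : ∃ p ∈ Δ, CloseBorder m p := by
  haveI : NeZero m := ⟨by omega⟩
  by_contra hno
  push_neg at hno
  obtain ⟨hdiag, hcr, hmax⟩ := hΔ
  have h2v : ((2 : ZMod m)).val = 2 := by
    have : ((2 : ℕ) : ZMod m).val = 2 := ZMod.val_cast_of_lt (by omega)
    simpa using this
  have h1v : ((1 : ZMod m)).val = 1 := by
    have : ((1 : ℕ) : ZMod m).val = 1 := ZMod.val_cast_of_lt (by omega)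
    simpa using this
  -- Key step: if some vertex `a+1` is not an endpoint of any diagonal, contradiction.
  have key : ∀ a : ZMod m, (∀ d : ZMod m, s(a + 1, d) ∉ Δ) → False := by
    intro a ha
    have hq2 : (a + 2 - a).val = 2 := by rw [add_sub_cancel_left]; exact h2v
    have hq2' : (a - (a + 2)).val = m - 2 := by
      have hne : a + 2 ≠ a := vpos (by omega)
      have := vneg hne
      omega
    have hend : ∀ c : ZMod m, Btw m a c (a + 2) → c = a + 1 := by
      rintro c ⟨hb1, hb2⟩
      rw [hq2] at hb2
      exact sub_val_eq (by rw [add_sub_cancel_left, h1v]; omega)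
    have hnc : ∀ r ∈ Δ, ¬ Crosses m s(a, a + 2) r := by
      rintro r hr ⟨x, y, c, d, hp, hq, hb1, hb2⟩
      rw [Sym2.eq_iff] at hp
      rcases hp with ⟨rfl, rfl⟩ | ⟨rfl, rfl⟩
      · have := hend c hb1
        subst this
        exact ha d (hq ▸ hr)
      · have := hend d hb2
        subst this
        refine ha c ?_
        rwa [hq, Sym2.eq_swap] at hr
    have hpoly : ∀ p ∈ insert s(a, a + 2) Δ, IsPolyDiag m p := by
      rintro p (rfl | hp)
      · intro x y hxy
        rw [Sym2.eq_iff] at hxy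
        rcases hxy with ⟨rfl, rfl⟩ | ⟨rfl, rfl⟩
        · constructor <;> omega
        · constructor <;> omega
      · exact hdiag p hp
    have hcr' : ∀ p ∈ insert s(a, a + 2) Δ, ∀ r ∈ insert s(a, a + 2) Δ,
        ¬ Crosses m p r := by
      rintro p (rfl | hp) r (rfl | hr)
      · exact not_crosses_self _
      · exact hnc r hr
      · exact fun h => hnc p hp (crosses_symm h)
      · exact hcr p hp r hr
    have heq := hmax _ (Set.subset_insert _ _) hpoly hcr'
    have hqΔ : s(a, a + 2) ∈ Δ := heq ▸ Set.mem_insert _ _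
    exact hno _ hqΔ ⟨a, a + 2, rfl, by omega⟩
  rcases Set.eq_empty_or_nonempty Δ with rfl | ⟨p0, hp0⟩
  · exact key 0 fun d hd => hd
  · revert hp0
    induction p0 using Sym2.ind with
    | _ x0 y0 =>
    intro hp0
    set S : Set ℕ := {n | ∃ x y : ZMod m, s(x, y) ∈ Δ ∧ (y - x).val = n} with hSdef
    have hSne : S.Nonempty := ⟨(y0 - x0).val, x0, y0, hp0, rfl⟩
    obtain ⟨a, b, hab, hkval⟩ := Nat.sInf_mem hSne
    have hmin : ∀ x y : ZMod m, s(x, y) ∈ Δ → sInf S ≤ (y - x).val :=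
      fun x y h => Nat.sInf_le ⟨x, y, h, rfl⟩
    have hk2 : 2 ≤ sInf S := by
      have := (hdiag _ hab a b rfl).1
      omega
    have hba : sInf S ≤ (a - b).val := hmin b a (by rwa [Sym2.eq_swap])
    have hk3 : 3 ≤ sInf S := by
      by_contra hlt
      exact hno _ hab ⟨a, b, rfl, by omega⟩
    have hc1 : (a + 1 - a).val = 1 := by rw [add_sub_cancel_left]; exact h1v
    apply key a
    intro d hd
    have hpd := hdiag _ hd (a + 1) d rfl
    have htlt : (d - a).val < m := ZMod.val_lt _
    obtain ⟨hpd1, hpd2⟩ := hpd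
    rcases lt_trichotomy (d - a).val (sInf S) with h | h | h
    · rcases Nat.lt_or_ge (d - a).val 2 with h01 | h2t
      · have haa : (a - a).val = 0 := by simp
        rcases Nat.lt_or_ge (d - a).val 1 with h00 | h11
        · have hda : d = a := sub_val_eq (a := a) (by omega)
          rw [hda] at hpd2
          omega
        · have hda : d = a + 1 := sub_val_eq (a := a) (by omega)
          have hz : (a + 1 - (a + 1)).val = 0 := by simp
          rw [hda] at hpd1
          omega
      · have hv : (d - a).val = (a + 1 - a).val + (d - (a + 1)).val :=
          vadd (a := a) (x := a + 1) (b := d) (by omega)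
        have := hmin (a + 1) d hd
        omega
    · have hdb : d = b := sub_val_eq (a := a) (by omega)
      rw [hdb] at hd
      have hv : (b - a).val = (a + 1 - a).val + (b - (a + 1)).val :=
        vadd (a := a) (x := a + 1) (b := b) (by omega)
      have := hmin (a + 1) b hd
      omega
    · have hv : (d - a).val = (b - a).val + (d - b).val :=
        vadd (a := a) (x := b) (b := d) (by omega)
      have hnb : b ≠ a := vpos (by omega)
      have hm1 := vneg hnb
      exact hcr _ hab _ hd
        ⟨a, b, a + 1, d, rfl, rfl, ⟨by omega, by omega⟩, ⟨by omega, by omega⟩⟩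


end CTA
end

section
/- For a triangulation Δ of a convex (n+3)-gon with n ≥ 3 and a diagonal α of Δ close to the border, the quiver of the triangulation Δ/α of the (n+2)-gon obtained by factoring out α equals the quiver obtained from Q_Δ by deleting the vertex v_α and all incident arrows. -/
namespace CTA

lemma val_sub' {M : ℕ} [NeZero M] (a b : ZMod M) :
    (a - b).val = if b.val ≤ a.val then a.val - b.val else M + a.val - b.val := by
  rcases le_or_gt b.val a.val with h | h
  · rw [if_pos h, ZMod.val_sub h]
  · rw [if_neg (not_le.mpr h)]
    have h1 : a - b = -(b - a) := by ring
    have hba : (b - a).val = b.val - a.val := ZMod.val_sub h.le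
    have hne : b - a ≠ 0 := by
      intro h0
      have := sub_eq_zero.mp h0
      subst this
      exact lt_irrefl _ h
    have hblt := ZMod.val_lt b
    rw [h1, ZMod.neg_val, if_neg hne, hba]
    omega

lemma btw_iff {M : ℕ} [NeZero M] (a x b : ZMod M) :
    Btw M a x b ↔ ((a.val < x.val ∧ x.val < b.val) ∨ (b.val < a.val ∧ a.val < x.val) ∨
      (x.val < b.val ∧ b.val < a.val)) := by
  have hx := ZMod.val_lt x; have ha := ZMod.val_lt a; have hb := ZMod.val_lt b
  unfold Btw
  rw [val_sub', val_sub']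
  split_ifs <;> omega

lemma val_add_one {M : ℕ} (hM : 1 < M) (x : ZMod M) :
    (x + 1).val = if x.val + 1 = M then 0 else x.val + 1 := by
  haveI : NeZero M := ⟨by omega⟩
  haveI : Fact (1 < M) := ⟨hM⟩
  rw [ZMod.val_add, ZMod.val_one]
  have := ZMod.val_lt x
  split_ifs with h
  · rw [h, Nat.mod_self]
  · exact Nat.mod_eq_of_lt (by omega)

lemma val_sub_one {M : ℕ} (hM : 1 < M) (x : ZMod M) :
    (x - 1).val = if x.val = 0 then M - 1 else x.val - 1 := by
  haveI : NeZero M := ⟨by omega⟩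
  haveI : Fact (1 < M) := ⟨hM⟩
  rw [val_sub', ZMod.val_one]
  have := ZMod.val_lt x
  split_ifs <;> omega

lemma val_ne_of_ne {M : ℕ} [NeZero M] {x y : ZMod M} (h : x ≠ y) : x.val ≠ y.val := by
  intro h'
  exact h (ZMod.val_injective _ h')

lemma delVtx_val {m : ℕ} (hm : 3 ≤ m) (v x : ZMod (m + 1)) (hx : x ≠ v) :
    (delVtx m v x).val = if x.val < v.val then x.val else x.val - 1 := by
  have hx' : x.val ≠ v.val := val_ne_of_ne hx
  have h1 := ZMod.val_lt x; have h2 := ZMod.val_lt v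
  unfold delVtx
  split_ifs with h
  · exact ZMod.val_natCast_of_lt (by omega)
  · exact ZMod.val_natCast_of_lt (by omega)

lemma delVtx_lt_iff {m : ℕ} (hm : 3 ≤ m) (v x y : ZMod (m + 1)) (hx : x ≠ v) (hy : y ≠ v) :
    (delVtx m v x).val < (delVtx m v y).val ↔ x.val < y.val := by
  have hx' := val_ne_of_ne hx; have hy' := val_ne_of_ne hy
  have h1 := ZMod.val_lt x; have h2 := ZMod.val_lt v; have h3 := ZMod.val_lt y
  rw [delVtx_val hm v x hx, delVtx_val hm v y hy]
  split_ifs <;> omega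

lemma delVtx_inj {m : ℕ} (hm : 3 ≤ m) {v x y : ZMod (m + 1)} (hx : x ≠ v) (hy : y ≠ v)
    (h : delVtx m v x = delVtx m v y) : x = y := by
  have hval := congrArg ZMod.val h
  rw [delVtx_val hm v x hx, delVtx_val hm v y hy] at hval
  have hx' := val_ne_of_ne hx; have hy' := val_ne_of_ne hy
  have h1 := ZMod.val_lt x; have h2 := ZMod.val_lt v; have h3 := ZMod.val_lt y
  apply ZMod.val_injective
  split_ifs at hval <;> omega

lemma btw_delVtx {m : ℕ} (hm : 3 ≤ m) {v a x b : ZMod (m + 1)} (ha : a ≠ v) (hx : x ≠ v)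
    (hb : b ≠ v) :
    Btw m (delVtx m v a) (delVtx m v x) (delVtx m v b) ↔ Btw (m + 1) a x b := by
  haveI : NeZero m := ⟨by omega⟩
  rw [btw_iff, btw_iff, delVtx_lt_iff hm v a x ha hx, delVtx_lt_iff hm v x b hx hb,
    delVtx_lt_iff hm v b a hb ha]

lemma delVtx_add_one {m : ℕ} (hm : 3 ≤ m) {v x : ZMod (m + 1)} (hx : x ≠ v)
    (hx1 : x + 1 ≠ v) : delVtx m v (x + 1) = delVtx m v x + 1 := by
  haveI : NeZero m := ⟨by omega⟩
  have hx' := val_ne_of_ne hx; have hx1' := val_ne_of_ne hx1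
  have h1 := ZMod.val_lt x; have h2 := ZMod.val_lt v
  apply ZMod.val_injective
  rw [delVtx_val hm v _ hx1, val_add_one (show 1 < m + 1 by omega) x,
    val_add_one (show 1 < m by omega) (delVtx m v x), delVtx_val hm v x hx]
  rw [val_add_one (show 1 < m + 1 by omega) x] at hx1'
  split_ifs at hx1' ⊢ <;> omega

lemma sub_one_ne {m : ℕ} (hm : 3 ≤ m) (v : ZMod (m + 1)) : v - 1 ≠ v := by
  intro h
  have := congrArg ZMod.val h
  rw [val_sub_one (show 1 < m + 1 by omega) v] at this
  have h2 := ZMod.val_lt v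
  split_ifs at this <;> omega

lemma add_one_ne {m : ℕ} (hm : 3 ≤ m) (v : ZMod (m + 1)) : v + 1 ≠ v := by
  intro h
  have := congrArg ZMod.val h
  rw [val_add_one (show 1 < m + 1 by omega) v] at this
  have h2 := ZMod.val_lt v
  split_ifs at this <;> omega

lemma delVtx_cut' {m : ℕ} (hm : 3 ≤ m) (v : ZMod (m + 1)) :
    delVtx m v (v + 1) = delVtx m v (v - 1) + 1 := by
  haveI : NeZero m := ⟨by omega⟩
  have h2 := ZMod.val_lt v
  apply ZMod.val_injective
  rw [delVtx_val hm v _ (add_one_ne hm v), val_add_one (show 1 < m + 1 by omega) v,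
    val_add_one (show 1 < m by omega) (delVtx m v (v - 1)),
    delVtx_val hm v _ (sub_one_ne hm v), val_sub_one (show 1 < m + 1 by omega) v]
  split_ifs <;> omega

lemma delVtx_succ_rev {m : ℕ} (hm : 3 ≤ m) {v x y : ZMod (m + 1)} (hx : x ≠ v) (hy : y ≠ v)
    (h : delVtx m v y = delVtx m v x + 1) : y = x + 1 ∨ (x = v - 1 ∧ y = v + 1) := by
  haveI : NeZero m := ⟨by omega⟩
  have hx' := val_ne_of_ne hx; have hy' := val_ne_of_ne hy
  have h1 := ZMod.val_lt x; have h2 := ZMod.val_lt v; have h3 := ZMod.val_lt y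
  have hval := congrArg ZMod.val h
  rw [delVtx_val hm v y hy, val_add_one (show 1 < m by omega) (delVtx m v x),
    delVtx_val hm v x hx] at hval
  have key : y.val = (x + 1).val ∨ (x.val = (v - 1).val ∧ y.val = (v + 1).val) := by
    rw [val_add_one (show 1 < m + 1 by omega) x, val_sub_one (show 1 < m + 1 by omega) v,
      val_add_one (show 1 < m + 1 by omega) v]
    split_ifs at hval ⊢ <;> omega
  rcases key with h' | ⟨h4, h5⟩
  · exact Or.inl (ZMod.val_injective _ h')
  · exact Or.inr ⟨ZMod.val_injective _ h4, ZMod.val_injective _ h5⟩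

lemma mem_ne_v {m : ℕ} (hm : 3 ≤ m) {Δ : Set (Sym2 (ZMod (m + 1)))}
    (hΔ : IsTriangulation (m + 1) Δ) {v : ZMod (m + 1)} (hv : cutDiag (m + 1) v ∈ Δ)
    {p : Sym2 (ZMod (m + 1))} (hp : p ∈ Δ) {x y : ZMod (m + 1)} (hxy : p = s(x, y)) :
    x ≠ v := by
  intro h
  subst h
  obtain ⟨hd1, hd2⟩ := hΔ.1 p hp x y hxy
  apply hΔ.2.1 _ hv _ hp
  have h1 := ZMod.val_lt x; have h2 := ZMod.val_lt y
  refine ⟨x - 1, x + 1, x, y, rfl, hxy, ?_, ?_⟩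
  · rw [btw_iff, val_sub_one (show 1 < m + 1 by omega) x,
      val_add_one (show 1 < m + 1 by omega) x]
    split_ifs <;> omega
  · rw [val_sub'] at hd1 hd2
    rw [btw_iff, val_sub_one (show 1 < m + 1 by omega) x,
      val_add_one (show 1 < m + 1 by omega) x]
    split_ifs at hd1 hd2 ⊢ <;> omega

lemma isEdge_contract {m : ℕ} (hm : 3 ≤ m) {Δ : Set (Sym2 (ZMod (m + 1)))}
    {v : ZMod (m + 1)} {b c : ZMod (m + 1)} (hb : b ≠ v) (hc : c ≠ v)
    (h : IsEdge (m + 1) Δ s(b, c)) :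
    IsEdge m (contract m v Δ) s(delVtx m v b, delVtx m v c) := by
  rcases h with hmem | ⟨e, he⟩
  · by_cases hcut : s(b, c) = cutDiag (m + 1) v
    · have hcut' : s(b, c) = s(v - 1, v + 1) := hcut
      rcases Sym2.eq_iff.mp hcut' with ⟨h1, h2⟩ | ⟨h1, h2⟩
      · right
        refine ⟨delVtx m v (v - 1), ?_⟩
        rw [h1, h2, delVtx_cut' hm v]
      · right
        refine ⟨delVtx m v (v - 1), ?_⟩
        rw [h1, h2, delVtx_cut' hm v]
        exact Sym2.eq_swap
    · left
      exact ⟨s(b, c), ⟨hmem, hcut⟩, Sym2.map_pair_eq _ _ _⟩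
  · rcases Sym2.eq_iff.mp he with ⟨h1, h2⟩ | ⟨h1, h2⟩
    · right
      refine ⟨delVtx m v b, ?_⟩
      rw [h2, ← h1, delVtx_add_one hm hb (by rw [h1, ← h2]; exact hc)]
    · right
      refine ⟨delVtx m v c, ?_⟩
      rw [h1, ← h2, delVtx_add_one hm hc (by rw [h2, ← h1]; exact hb)]
      exact Sym2.eq_swap

lemma isEdge_reflect {m : ℕ} (hm : 3 ≤ m) {Δ : Set (Sym2 (ZMod (m + 1)))}
    (hΔ : IsTriangulation (m + 1) Δ) {v : ZMod (m + 1)} (hv : cutDiag (m + 1) v ∈ Δ)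
    {b c : ZMod (m + 1)} (hb : b ≠ v) (hc : c ≠ v)
    (h : IsEdge m (contract m v Δ) s(delVtx m v b, delVtx m v c)) :
    IsEdge (m + 1) Δ s(b, c) := by
  rcases h with hmem | ⟨e, he⟩
  · obtain ⟨r, ⟨hr, hrc⟩, hmap⟩ := hmem
    obtain ⟨x, y, rfl⟩ : ∃ x y, r = s(x, y) := ⟨r.out.1, r.out.2, r.out_eq.symm⟩
    have hx : x ≠ v := mem_ne_v hm hΔ hv hr rfl
    have hy : y ≠ v := mem_ne_v hm hΔ hv hr Sym2.eq_swap
    rw [Sym2.map_pair_eq] at hmap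
    rcases Sym2.eq_iff.mp hmap with ⟨h1, h2⟩ | ⟨h1, h2⟩
    · left
      rw [← delVtx_inj hm hx hb h1, ← delVtx_inj hm hy hc h2]
      exact hr
    · left
      rw [← delVtx_inj hm hx hc h1, ← delVtx_inj hm hy hb h2, Sym2.eq_swap]
      exact hr
  · rcases Sym2.eq_iff.mp he with ⟨h1, h2⟩ | ⟨h1, h2⟩
    · have hsucc : delVtx m v c = delVtx m v b + 1 := by rw [h2, ← h1]
      rcases delVtx_succ_rev hm hb hc hsucc with h3 | ⟨h3, h4⟩
      · right; exact ⟨b, by rw [h3]⟩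
      · left; rw [h3, h4]; exact hv
    · have hsucc : delVtx m v b = delVtx m v c + 1 := by rw [h1, ← h2]
      rcases delVtx_succ_rev hm hc hb hsucc with h3 | ⟨h3, h4⟩
      · right; refine ⟨c, ?_⟩; rw [h3]; exact Sym2.eq_swap
      · left
        rw [h4, h3, Sym2.eq_swap]
        exact hv


/-- For `n ≥ 3`, the quiver of the triangulation obtained by factoring out a diagonal close
to the border (cutting off the vertex `v`) is the quiver obtained from `Q_Δ` by deleting
the corresponding vertex and all incident arrows. -/
theorem contract_quiver (n : ℕ) (hn : 3 ≤ n) (Δ : Set (Sym2 (ZMod (n + 3))))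
    (v : ZMod (n + 3)) (hΔ : IsTriangulation (n + 3) Δ) (hv : cutDiag (n + 3) v ∈ Δ) :
    Set.InjOn (Sym2.map (delVtx (n + 2) v)) (Δ \ {cutDiag (n + 3) v}) ∧
    ∀ p ∈ Δ \ {cutDiag (n + 3) v}, ∀ q ∈ Δ \ {cutDiag (n + 3) v},
      (Arrow (n + 3) Δ p q ↔
        Arrow (n + 2) (contract (n + 2) v Δ)
          (Sym2.map (delVtx (n + 2) v) p) (Sym2.map (delVtx (n + 2) v) q)) := by
  have hm : 3 ≤ n + 2 := by omega
  have hΔ' : IsTriangulation (n + 2 + 1) Δ := hΔ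
  have hv' : cutDiag (n + 2 + 1) v ∈ Δ := hv
  constructor
  · rintro p ⟨hp, -⟩ q ⟨hq, -⟩ hpq
    obtain ⟨a, b, rfl⟩ : ∃ x y, p = s(x, y) := ⟨p.out.1, p.out.2, p.out_eq.symm⟩
    obtain ⟨x, y, rfl⟩ : ∃ x y, q = s(x, y) := ⟨q.out.1, q.out.2, q.out_eq.symm⟩
    have ha : a ≠ v := mem_ne_v hm hΔ' hv' hp rfl
    have hb : b ≠ v := mem_ne_v hm hΔ' hv' hp Sym2.eq_swap
    have hx : x ≠ v := mem_ne_v hm hΔ' hv' hq rfl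
    have hy : y ≠ v := mem_ne_v hm hΔ' hv' hq Sym2.eq_swap
    rw [Sym2.map_pair_eq, Sym2.map_pair_eq] at hpq
    rcases Sym2.eq_iff.mp hpq with ⟨h1, h2⟩ | ⟨h1, h2⟩
    · rw [delVtx_inj hm ha hx h1, delVtx_inj hm hb hy h2]
    · rw [delVtx_inj hm ha hy h1, delVtx_inj hm hb hx h2, Sym2.eq_swap]
  · rintro p ⟨hp, hpc⟩ q ⟨hq, hqc⟩
    have hpc' : p ≠ cutDiag (n + 3) v := hpc
    have hqc' : q ≠ cutDiag (n + 3) v := hqc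
    constructor
    · rintro ⟨-, -, a, b, c, rfl, rfl, hedge, hbtw⟩
      have ha : a ≠ v := mem_ne_v hm hΔ' hv' hp rfl
      have hb : b ≠ v := mem_ne_v hm hΔ' hv' hp Sym2.eq_swap
      have hc : c ≠ v := mem_ne_v hm hΔ' hv' hq Sym2.eq_swap
      refine ⟨⟨s(a, b), ⟨hp, hpc'⟩, rfl⟩, ⟨s(a, c), ⟨hq, hqc'⟩, rfl⟩,
        delVtx (n + 2) v a, delVtx (n + 2) v b, delVtx (n + 2) v c,
        Sym2.map_pair_eq _ _ _, Sym2.map_pair_eq _ _ _, ?_, ?_⟩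
      · exact isEdge_contract hm hb hc hedge
      · exact (btw_delVtx hm hb hc ha).mpr hbtw
    · rintro ⟨-, -, a', b', c', hpe, hqe, hedge, hbtw⟩
      obtain ⟨a, b, rfl⟩ : ∃ x y, p = s(x, y) := ⟨p.out.1, p.out.2, p.out_eq.symm⟩
      obtain ⟨x, c, rfl⟩ : ∃ x y, q = s(x, y) := ⟨q.out.1, q.out.2, q.out_eq.symm⟩
      rw [Sym2.map_pair_eq] at hpe hqe
      obtain ⟨a₀, b₀, hP, ha₀, hb₀⟩ : ∃ a₀ b₀, s(a, b) = s(a₀, b₀) ∧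
          delVtx (n + 2) v a₀ = a' ∧ delVtx (n + 2) v b₀ = b' := by
        rcases Sym2.eq_iff.mp hpe with ⟨h1, h2⟩ | ⟨h1, h2⟩
        · exact ⟨a, b, rfl, h1, h2⟩
        · exact ⟨b, a, Sym2.eq_swap, h2, h1⟩
      obtain ⟨a₁, c₀, hQ, ha₁, hc₀⟩ : ∃ a₁ c₀, s(x, c) = s(a₁, c₀) ∧
          delVtx (n + 2) v a₁ = a' ∧ delVtx (n + 2) v c₀ = c' := by
        rcases Sym2.eq_iff.mp hqe with ⟨h1, h2⟩ | ⟨h1, h2⟩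
        · exact ⟨x, c, rfl, h1, h2⟩
        · exact ⟨c, x, Sym2.eq_swap, h2, h1⟩
      have ha₀v : a₀ ≠ v := mem_ne_v hm hΔ' hv' hp hP
      have hb₀v : b₀ ≠ v := mem_ne_v hm hΔ' hv' hp (hP.trans Sym2.eq_swap)
      have ha₁v : a₁ ≠ v := mem_ne_v hm hΔ' hv' hq hQ
      have hc₀v : c₀ ≠ v := mem_ne_v hm hΔ' hv' hq (hQ.trans Sym2.eq_swap)
      have haa : a₁ = a₀ := delVtx_inj hm ha₁v ha₀v (ha₁.trans ha₀.symm)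
      refine ⟨hp, hq, a₀, b₀, c₀, hP, by rw [hQ, haa], ?_, ?_⟩
      · apply isEdge_reflect hm hΔ' hv' hb₀v hc₀v
        rw [hb₀, hc₀]
        exact hedge
      · rw [← hb₀, ← hc₀, ← ha₀] at hbtw
        exact (btw_delVtx hm hb₀v hc₀v ha₀v).mp hbtw

end CTA
end
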